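/- arXiv:1601.02330 — 5 statements merged into one kernel-verified Lean document; each statement's English description precedes it below -/
import Mathlib

section
/- Let k be a positive integer such that k = 3m² for some positive integer m. Then 4·L₁,₂(k) = N₁,₂(k) − 4. -/
noncomputable def N12 (k : ℕ) : ℕ := {p : ℤ × ℤ | p.1 ^ 2 + 2 * p.2 ^ 2 = (k : ℤ)}.ncard

noncomputable def L12 (k : ℕ) : ℕ := {p : ℕ × ℕ | 0 < p.1 ∧ 0 < p.2 ∧ p.1 ≠ p.2 ∧ p.1 ^ 2 + 2 * p.2 ^ 2 = k}.ncard

lemma fact3_sq_ne {a b : ℕ} (hb : b ≠ 0) : a ^ 2 ≠ 3 * b ^ 2 := by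
  intro h
  have h3 : Nat.Prime 3 := by norm_num
  have ha : a ≠ 0 := by
    rintro rfl
    simp at h
    omega
  have := congrArg (fun n => n.factorization 3) h
  simp only [Nat.factorization_mul (by norm_num : (3:ℕ) ≠ 0) (pow_ne_zero 2 hb),
    Nat.factorization_pow, Finsupp.coe_add, Pi.add_apply, Finsupp.coe_smul, Pi.smul_apply,
    smul_eq_mul, h3.factorization, Finsupp.single_apply] at this
  simp at this
  omega

lemma fact3_two_sq_ne {a b : ℕ} (hb : b ≠ 0) : 2 * a ^ 2 ≠ 3 * b ^ 2 := by
  intro h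
  have h3 : Nat.Prime 3 := by norm_num
  have h2 : Nat.Prime 2 := by norm_num
  have ha : a ≠ 0 := by
    rintro rfl
    simp at h
    omega
  have := congrArg (fun n => n.factorization 3) h
  simp only [Nat.factorization_mul (by norm_num : (2:ℕ) ≠ 0) (pow_ne_zero 2 ha),
    Nat.factorization_mul (by norm_num : (3:ℕ) ≠ 0) (pow_ne_zero 2 hb),
    Nat.factorization_pow, Finsupp.coe_add, Pi.add_apply, Finsupp.coe_smul, Pi.smul_apply,
    smul_eq_mul, h3.factorization, h2.factorization, Finsupp.single_apply] at this
  simp at this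
  omega

lemma ncard_prod' {α β : Type*} (s : Set α) (t : Set β) :
    (s ×ˢ t).ncard = s.ncard * t.ncard := by
  rw [← Nat.card_coe_set_eq, ← Nat.card_coe_set_eq, ← Nat.card_coe_set_eq,
    Nat.card_congr (Equiv.Set.prod s t), Nat.card_prod]

set_option maxHeartbeats 1000000 in
theorem stmt2 (k : ℕ) (hk : 0 < k)
    (h : ∃ m : ℕ, 0 < m ∧ k = 3 * m ^ 2) :
    (4 * L12 k : ℤ) = N12 k - 4 := by
  obtain ⟨m, hm, rfl⟩ := h
  set K : ℕ := 3 * m ^ 2 with hK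
  -- the integer solution set
  set T : Set (ℤ × ℤ) := {p : ℤ × ℤ | p.1 ^ 2 + 2 * p.2 ^ 2 = (K : ℤ)} with hT
  set Ls : Set (ℕ × ℕ) :=
    {p : ℕ × ℕ | 0 < p.1 ∧ 0 < p.2 ∧ p.1 ≠ p.2 ∧ p.1 ^ 2 + 2 * p.2 ^ 2 = K} with hLs
  -- basic facts about members of T
  have key : ∀ p : ℤ × ℤ, p ∈ T →
      p.1.natAbs ^ 2 + 2 * p.2.natAbs ^ 2 = K ∧ p.1 ≠ 0 ∧ p.2 ≠ 0 := by
    intro p hp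
    have hp' : p.1 ^ 2 + 2 * p.2 ^ 2 = (K : ℤ) := hp
    have heq : p.1.natAbs ^ 2 + 2 * p.2.natAbs ^ 2 = K := by
      have : ((p.1.natAbs ^ 2 + 2 * p.2.natAbs ^ 2 : ℕ) : ℤ) = (K : ℤ) := by
        push_cast
        rw [sq_abs, sq_abs]
        exact hp'
      exact_mod_cast this
    refine ⟨heq, ?_, ?_⟩
    · intro h0
      have hz : p.1.natAbs = 0 := by simp [h0]
      rw [hz] at heq
      exact fact3_two_sq_ne hm.ne' (by simpa [hK] using heq)
    · intro h0
      have hz : p.2.natAbs = 0 := by simp [h0]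
      rw [hz] at heq
      exact fact3_sq_ne hm.ne' (by simpa [hK] using heq)
  -- finiteness
  have hTfin : T.Finite := by
    apply Set.Finite.subset (Set.finite_Icc ((-(K:ℤ), -(K:ℤ)) : ℤ × ℤ) ((K:ℤ), (K:ℤ)))
    intro p hp
    have hp' : p.1 ^ 2 + 2 * p.2 ^ 2 = (K : ℤ) := hp
    have hK1 : (1 : ℤ) ≤ (K : ℤ) := by exact_mod_cast hk
    simp only [Set.mem_Icc, Prod.mk_le_mk]
    refine ⟨⟨?_, ?_⟩, ?_, ?_⟩ <;> dsimp only <;>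
      nlinarith [sq_nonneg p.1, sq_nonneg p.2, sq_nonneg (p.1 + (K:ℤ)),
        sq_nonneg (p.1 - (K:ℤ)), sq_nonneg (p.2 + (K:ℤ)), sq_nonneg (p.2 - (K:ℤ)),
        sq_nonneg ((K:ℤ) - 1)]
  have hLfin : Ls.Finite := by
    apply Set.Finite.subset (Set.finite_Icc ((0, 0) : ℕ × ℕ) ((K, K) : ℕ × ℕ))
    intro p hp
    obtain ⟨_, _, _, hp4⟩ := hp
    constructor
    · exact ⟨Nat.zero_le _, Nat.zero_le _⟩
    · constructor <;> nlinarith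
  -- split T
  set A : Set (ℤ × ℤ) := {p ∈ T | p.1.natAbs = p.2.natAbs} with hA
  set B : Set (ℤ × ℤ) := {p ∈ T | p.1.natAbs ≠ p.2.natAbs} with hB
  have hunion : T = A ∪ B := by
    ext p
    by_cases hc : p.1.natAbs = p.2.natAbs <;> simp [hA, hB, hT, Set.mem_setOf_eq, hc]
  have hdisj : Disjoint A B := by
    rw [Set.disjoint_left]
    rintro p ⟨_, h1⟩ ⟨_, h2⟩
    exact h2 h1
  -- A is the four diagonal points
  have hAeq : A = {((m : ℤ), (m : ℤ)), ((m : ℤ), -(m : ℤ)), (-(m : ℤ), (m : ℤ)),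
      (-(m : ℤ), -(m : ℤ))} := by
    ext p
    constructor
    · rintro ⟨hp, habs⟩
      have hp' : p.1 ^ 2 + 2 * p.2 ^ 2 = (K : ℤ) := hp
      have hsq : p.1 ^ 2 = p.2 ^ 2 := by
        rw [← sq_abs p.1, ← sq_abs p.2, Int.abs_eq_natAbs, Int.abs_eq_natAbs, habs]
      have hKI : (K : ℤ) = 3 * (m : ℤ) ^ 2 := by push_cast [hK]; ring
      have h1 : p.1 ^ 2 = (m : ℤ) ^ 2 := by rw [hKI] at hp'; nlinarith
      have h2 : p.2 ^ 2 = (m : ℤ) ^ 2 := by rw [← hsq]; exact h1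
      have e1 : p.1 = (m : ℤ) ∨ p.1 = -(m : ℤ) := by
        have : (p.1 - m) * (p.1 + m) = 0 := by nlinarith
        rcases mul_eq_zero.mp this with h | h
        · left; linarith
        · right; linarith
      have e2 : p.2 = (m : ℤ) ∨ p.2 = -(m : ℤ) := by
        have : (p.2 - m) * (p.2 + m) = 0 := by nlinarith
        rcases mul_eq_zero.mp this with h | h
        · left; linarith
        · right; linarith
      rcases e1 with h1 | h1 <;> rcases e2 with h2 | h2 <;>
        simp [Prod.ext_iff, h1, h2]
    · intro hp
      have hKI : ((m : ℤ)) ^ 2 + 2 * (m : ℤ) ^ 2 = (K : ℤ) := by push_cast [hK]; ring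
      rcases hp with h | h | h | h <;> subst h <;>
        refine ⟨?_, by simp⟩ <;>
        · rw [hT]
          simp only [Set.mem_setOf_eq]
          push_cast [hK]
          ring
  have hAcard : A.ncard = 4 := by
    rw [hAeq]
    have hm0 : (m : ℤ) ≠ 0 := by exact_mod_cast hm.ne'
    have hmn : (m : ℤ) ≠ -(m : ℤ) := by omega
    rw [Set.ncard_insert_of_notMem (by simp [Prod.ext_iff]; omega) (by
        apply Set.Finite.insert; apply Set.Finite.insert; exact Set.finite_singleton _),
      Set.ncard_insert_of_notMem (by simp [Prod.ext_iff]; omega) (by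
        apply Set.Finite.insert; exact Set.finite_singleton _),
      Set.ncard_insert_of_notMem (by simp [Prod.ext_iff]; omega) (Set.finite_singleton _),
      Set.ncard_singleton]
  -- B is the image of Ls × signs
  set Φ : (ℕ × ℕ) × (Bool × Bool) → ℤ × ℤ :=
    fun q => ((if q.2.1 then (q.1.1 : ℤ) else -(q.1.1 : ℤ)),
              (if q.2.2 then (q.1.2 : ℤ) else -(q.1.2 : ℤ))) with hΦ
  have hBeq : B = Φ '' (Ls ×ˢ (Set.univ : Set (Bool × Bool))) := by
    ext p
    constructor
    · rintro ⟨hp, hne⟩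
      obtain ⟨heq, hx0, hy0⟩ := key p hp
      refine ⟨((p.1.natAbs, p.2.natAbs), (decide (0 ≤ p.1), decide (0 ≤ p.2))), ?_, ?_⟩
      · exact ⟨⟨Int.natAbs_pos.mpr hx0, Int.natAbs_pos.mpr hy0, hne, heq⟩, trivial⟩
      · simp only [hΦ]
        have e1 : (if (decide (0 ≤ p.1) : Bool) then (p.1.natAbs : ℤ) else -(p.1.natAbs : ℤ))
            = p.1 := by
          by_cases hp1 : 0 ≤ p.1
          · rw [Int.natAbs_of_nonneg hp1]
            simp [hp1]
          · rw [Int.ofNat_natAbs_of_nonpos (le_of_not_ge hp1)]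
            simp [hp1]
        have e2 : (if (decide (0 ≤ p.2) : Bool) then (p.2.natAbs : ℤ) else -(p.2.natAbs : ℤ))
            = p.2 := by
          by_cases hp2 : 0 ≤ p.2
          · rw [Int.natAbs_of_nonneg hp2]
            simp [hp2]
          · rw [Int.ofNat_natAbs_of_nonpos (le_of_not_ge hp2)]
            simp [hp2]
        exact Prod.ext e1 e2
    · rintro ⟨⟨⟨a, b⟩, ⟨s, t⟩⟩, ⟨⟨ha, hb, hab, habk⟩, -⟩, rfl⟩
      have hEq : ((if s then (a : ℤ) else -(a : ℤ))) ^ 2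
          + 2 * ((if t then (b : ℤ) else -(b : ℤ))) ^ 2 = (K : ℤ) := by
        have : ((a : ℤ)) ^ 2 + 2 * (b : ℤ) ^ 2 = (K : ℤ) := by exact_mod_cast habk
        cases s <;> cases t <;> simpa using this
      refine ⟨hEq, ?_⟩
      have n1 : ((if s then (a : ℤ) else -(a : ℤ))).natAbs = a := by
        cases s <;> simp
      have n2 : ((if t then (b : ℤ) else -(b : ℤ))).natAbs = b := by
        cases t <;> simp
      simp only [hΦ, n1, n2]
      exact hab
  have hinj : Set.InjOn Φ (Ls ×ˢ (Set.univ : Set (Bool × Bool))) := by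
    rintro ⟨⟨a, b⟩, ⟨s, t⟩⟩ ⟨⟨ha, hb, -, -⟩, -⟩ ⟨⟨a', b'⟩, ⟨s', t'⟩⟩ ⟨⟨ha', hb', -, -⟩, -⟩ heq
    simp only [hΦ, Prod.mk.injEq] at heq
    obtain ⟨h1, h2⟩ := heq
    have ha1 : (0 : ℤ) < a := by exact_mod_cast ha
    have hb1 : (0 : ℤ) < b := by exact_mod_cast hb
    have ha1' : (0 : ℤ) < a' := by exact_mod_cast ha'
    have hb1' : (0 : ℤ) < b' := by exact_mod_cast hb'
    cases s <;> cases s' <;> cases t <;> cases t' <;>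
      simp only [if_true, Bool.false_eq_true, if_false] at h1 h2 <;>
      simp [Prod.mk.injEq] <;> omega
  have hBcard : B.ncard = Ls.ncard * 4 := by
    rw [hBeq, Set.ncard_image_of_injOn hinj, ncard_prod', Set.ncard_univ]
    simp [Nat.card_eq_fintype_card]
  -- put it together
  have hAfin : A.Finite := hTfin.subset (fun p hp => hp.1)
  have hBfin : B.Finite := hTfin.subset (fun p hp => hp.1)
  have hN : N12 K = 4 + Ls.ncard * 4 := by
    have : N12 K = T.ncard := rfl
    rw [this, hunion, Set.ncard_union_eq hdisj hAfin hBfin, hAcard, hBcard]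
  have hL : L12 K = Ls.ncard := rfl
  rw [hN, hL]
  push_cast
  ring
end

section
/- Let k be a positive integer such that either k = m² for some odd positive integer m, or k = 3m² for some positive integer m. Then 4·L₁,₃(k) = N₁,₃(k) − 2. -/
noncomputable def N13 (k : ℕ) : ℕ := {p : ℤ × ℤ | p.1 ^ 2 + 3 * p.2 ^ 2 = (k : ℤ)}.ncard

noncomputable def L13 (k : ℕ) : ℕ := {p : ℕ × ℕ | 0 < p.1 ∧ 0 < p.2 ∧ p.1 ≠ p.2 ∧ p.1 ^ 2 + 3 * p.2 ^ 2 = k}.ncard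

lemma aux3 (a b : ℕ) (h : 3 * a ^ 2 = b ^ 2) : a = 0 ∧ b = 0 := by
  rcases eq_or_ne a 0 with rfl | ha
  · simp at h; exact ⟨rfl, by nlinarith⟩
  · exfalso
    have hb : b ≠ 0 := by rintro rfl; simp at h; exact ha (by nlinarith)
    have := congrArg (fun n => n.factorization 3) h
    simp [Nat.factorization_mul (by norm_num : (3:ℕ) ≠ 0) (pow_ne_zero 2 ha),
      Nat.factorization_pow, Nat.Prime.factorization (by norm_num : Nat.Prime 3)] at this
    omega

def e1 : ℕ × ℕ → ℤ × ℤ := fun q => ((q.1 : ℤ), (q.2 : ℤ))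
def e2 : ℕ × ℕ → ℤ × ℤ := fun q => (-(q.1 : ℤ), (q.2 : ℤ))
def e3 : ℕ × ℕ → ℤ × ℤ := fun q => ((q.1 : ℤ), -(q.2 : ℤ))
def e4 : ℕ × ℕ → ℤ × ℤ := fun q => (-(q.1 : ℤ), -(q.2 : ℤ))

lemma natAbs_sq' (x : ℤ) : ((x.natAbs : ℤ)) ^ 2 = x ^ 2 := by
  rw [Int.natAbs_sq]  -- test name

lemma count (k : ℕ) (hk : 0 < k)
    (hA : {p : ℤ × ℤ | (p.1 ^ 2 + 3 * p.2 ^ 2 = (k : ℤ)) ∧ (p.1 = 0 ∨ p.2 = 0)}.ncard = 2)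
    (hne : ∀ a : ℕ, 4 * a ^ 2 ≠ k) :
    (4 * L13 k : ℤ) = N13 k - 2 := by
  classical
  set S : Set (ℤ × ℤ) := {p | p.1 ^ 2 + 3 * p.2 ^ 2 = (k : ℤ)} with hSdef
  set A : Set (ℤ × ℤ) := {p | (p.1 ^ 2 + 3 * p.2 ^ 2 = (k : ℤ)) ∧ (p.1 = 0 ∨ p.2 = 0)} with hAdef
  set G : Set (ℤ × ℤ) := {p | (p.1 ^ 2 + 3 * p.2 ^ 2 = (k : ℤ)) ∧ p.1 ≠ 0 ∧ p.2 ≠ 0} with hGdef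
  set T : Set (ℕ × ℕ) := {q | 0 < q.1 ∧ 0 < q.2 ∧ q.1 ^ 2 + 3 * q.2 ^ 2 = k} with hTdef
  have hSfin : S.Finite := by
    apply (Set.finite_Icc ((-(k:ℤ), -(k:ℤ))) (((k:ℤ), (k:ℤ)))).subset
    rintro ⟨x, y⟩ hxy
    simp only [hSdef, Set.mem_setOf_eq] at hxy
    have hk1 : (1 : ℤ) ≤ (k : ℤ) := by exact_mod_cast hk
    simp only [Set.mem_Icc, Prod.mk_le_mk]
    refine ⟨⟨?_, ?_⟩, ?_, ?_⟩ <;> nlinarith [sq_nonneg x, sq_nonneg y]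
  have hSAG : S = A ∪ G := by
    ext p; simp only [hSdef, hAdef, hGdef, Set.mem_setOf_eq, Set.mem_union]; tauto
  have hAG : Disjoint A G := by
    rw [Set.disjoint_left]; rintro p ⟨_, h0⟩ ⟨_, h1, h2⟩; tauto
  have hAfin : A.Finite := hSfin.subset (by rintro p ⟨hp, _⟩; exact hp)
  have hGfin : G.Finite := hSfin.subset (by rintro p ⟨hp, _⟩; exact hp)
  have hinj1 : Function.Injective e1 := by
    rintro ⟨a,b⟩ ⟨c,d⟩ h; simp only [e1, Prod.ext_iff] at h ⊢; omega
  have hinj2 : Function.Injective e2 := by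
    rintro ⟨a,b⟩ ⟨c,d⟩ h; simp only [e2, Prod.ext_iff] at h ⊢; omega
  have hinj3 : Function.Injective e3 := by
    rintro ⟨a,b⟩ ⟨c,d⟩ h; simp only [e3, Prod.ext_iff] at h ⊢; omega
  have hinj4 : Function.Injective e4 := by
    rintro ⟨a,b⟩ ⟨c,d⟩ h; simp only [e4, Prod.ext_iff] at h ⊢; omega
  have hG : G = e1 '' T ∪ e2 '' T ∪ e3 '' T ∪ e4 '' T := by
    ext ⟨x, y⟩
    constructor
    · rintro ⟨heq, hx, hy⟩
      have hT : (x.natAbs, y.natAbs) ∈ T := by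
        refine ⟨Int.natAbs_pos.mpr hx, Int.natAbs_pos.mpr hy, ?_⟩
        have : ((x.natAbs : ℤ)) ^ 2 + 3 * ((y.natAbs : ℤ)) ^ 2 = (k : ℤ) := by
          rw [natAbs_sq', natAbs_sq']; exact heq
        exact_mod_cast this
      rcases Int.natAbs_eq x with hx' | hx' <;> rcases Int.natAbs_eq y with hy' | hy'
      · refine Or.inl (Or.inl (Or.inl ⟨_, hT, ?_⟩))
        simp only [e1, Prod.ext_iff]; exact ⟨hx'.symm, hy'.symm⟩
      · refine Or.inl (Or.inr ⟨_, hT, ?_⟩)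
        simp only [e3, Prod.ext_iff]; exact ⟨hx'.symm, (by omega : -((y.natAbs : ℤ)) = y)⟩
      · refine Or.inl (Or.inl (Or.inr ⟨_, hT, ?_⟩))
        simp only [e2, Prod.ext_iff]; exact ⟨(by omega : -((x.natAbs : ℤ)) = x), hy'.symm⟩
      · refine Or.inr ⟨_, hT, ?_⟩
        simp only [e4, Prod.ext_iff]
        exact ⟨(by omega : -((x.natAbs : ℤ)) = x), (by omega : -((y.natAbs : ℤ)) = y)⟩
    · rintro (((⟨⟨a,b⟩, ⟨ha, hb, hab⟩, hp⟩ | ⟨⟨a,b⟩, ⟨ha, hb, hab⟩, hp⟩) |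
        ⟨⟨a,b⟩, ⟨ha, hb, hab⟩, hp⟩) | ⟨⟨a,b⟩, ⟨ha, hb, hab⟩, hp⟩) <;>
      · simp only [e1, e2, e3, e4, Prod.ext_iff] at hp
        obtain ⟨h1, h2⟩ := hp
        refine ⟨?_, ?_, ?_⟩
        · rw [← h1, ← h2]; push_cast at hab ⊢; linarith [hab]
        · omega
        · omega
  have hTfin : T.Finite := by
    have : e1 '' T ⊆ S := by
      rintro p ⟨⟨a,b⟩, ⟨ha, hb, hab⟩, rfl⟩
      simp only [hSdef, Set.mem_setOf_eq, e1]
      exact_mod_cast congrArg (Nat.cast : ℕ → ℤ) hab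
    exact Set.Finite.of_finite_image (hSfin.subset this) (hinj1.injOn)
  have d12 : Disjoint (e1 '' T) (e2 '' T) := by
    rw [Set.disjoint_left]
    rintro p ⟨⟨a,b⟩, ⟨ha, _, _⟩, rfl⟩ ⟨⟨c,d⟩, ⟨hc, _, _⟩, hp⟩
    simp only [e1, e2, Prod.ext_iff] at hp; omega
  have d13 : Disjoint (e1 '' T) (e3 '' T) := by
    rw [Set.disjoint_left]
    rintro p ⟨⟨a,b⟩, ⟨_, hb, _⟩, rfl⟩ ⟨⟨c,d⟩, ⟨_, hd, _⟩, hp⟩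
    simp only [e1, e3, Prod.ext_iff] at hp; omega
  have d14 : Disjoint (e1 '' T) (e4 '' T) := by
    rw [Set.disjoint_left]
    rintro p ⟨⟨a,b⟩, ⟨ha, _, _⟩, rfl⟩ ⟨⟨c,d⟩, ⟨hc, _, _⟩, hp⟩
    simp only [e1, e4, Prod.ext_iff] at hp; omega
  have d23 : Disjoint (e2 '' T) (e3 '' T) := by
    rw [Set.disjoint_left]
    rintro p ⟨⟨a,b⟩, ⟨ha, _, _⟩, rfl⟩ ⟨⟨c,d⟩, ⟨hc, _, _⟩, hp⟩
    simp only [e2, e3, Prod.ext_iff] at hp; omega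
  have d24 : Disjoint (e2 '' T) (e4 '' T) := by
    rw [Set.disjoint_left]
    rintro p ⟨⟨a,b⟩, ⟨_, hb, _⟩, rfl⟩ ⟨⟨c,d⟩, ⟨_, hd, _⟩, hp⟩
    simp only [e2, e4, Prod.ext_iff] at hp; omega
  have d34 : Disjoint (e3 '' T) (e4 '' T) := by
    rw [Set.disjoint_left]
    rintro p ⟨⟨a,b⟩, ⟨ha, _, _⟩, rfl⟩ ⟨⟨c,d⟩, ⟨hc, _, _⟩, hp⟩
    simp only [e3, e4, Prod.ext_iff] at hp; omega
  have hGcard : G.ncard = 4 * T.ncard := by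
    rw [hG]
    rw [Set.ncard_union_eq (by
        exact Set.disjoint_union_left.mpr ⟨Set.disjoint_union_left.mpr ⟨d14, d24⟩, d34⟩)
      (((hTfin.image e1).union (hTfin.image e2)).union (hTfin.image e3)) (hTfin.image e4),
      Set.ncard_union_eq (Set.disjoint_union_left.mpr ⟨d13, d23⟩)
      ((hTfin.image e1).union (hTfin.image e2)) (hTfin.image e3),
      Set.ncard_union_eq d12 (hTfin.image e1) (hTfin.image e2),
      Set.ncard_image_of_injective T hinj1, Set.ncard_image_of_injective T hinj2,
      Set.ncard_image_of_injective T hinj3, Set.ncard_image_of_injective T hinj4]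
    ring
  have hL : L13 k = T.ncard := by
    unfold L13
    congr 1
    ext ⟨a, b⟩
    simp only [hTdef, Set.mem_setOf_eq]
    constructor
    · rintro ⟨ha, hb, _, heq⟩; exact ⟨ha, hb, heq⟩
    · rintro ⟨ha, hb, heq⟩
      refine ⟨ha, hb, ?_, heq⟩
      intro hab
      subst hab
      exact hne a (by omega)
  have hN : N13 k = 2 + 4 * T.ncard := by
    have : N13 k = S.ncard := rfl
    rw [this, hSAG, Set.ncard_union_eq hAG hAfin hGfin, hA, hGcard]
  rw [hL, hN]
  push_cast
  ring

theorem stmt4 (k : ℕ) (hk : 0 < k)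
    (h : (∃ m : ℕ, 0 < m ∧ Odd m ∧ k = m ^ 2) ∨ (∃ m : ℕ, 0 < m ∧ k = 3 * m ^ 2)) :
    (4 * L13 k : ℤ) = N13 k - 2 := by
  have hne : ∀ a : ℕ, 4 * a ^ 2 ≠ k := by
    rcases h with ⟨m, hm, hodd, rfl⟩ | ⟨m, hm, rfl⟩
    · intro a hc
      have h2 : (2 * a) ^ 2 = m ^ 2 := by calc (2*a)^2 = 4 * a^2 := by ring
                                              _ = m ^ 2 := hc
      have := Nat.pow_left_injective (by norm_num) h2
      obtain ⟨c, hc'⟩ := hodd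
      omega
    · intro a hc
      have h2 : 3 * m ^ 2 = (2 * a) ^ 2 := by calc 3 * m^2 = 4 * a^2 := hc.symm
                                                   _ = (2*a)^2 := by ring
      exact absurd (aux3 _ _ h2).1 (by omega)
  apply count k hk _ hne
  rcases h with ⟨m, hm, hodd, rfl⟩ | ⟨m, hm, rfl⟩
  · have hset : {p : ℤ × ℤ | (p.1 ^ 2 + 3 * p.2 ^ 2 = ((m ^ 2 : ℕ) : ℤ)) ∧ (p.1 = 0 ∨ p.2 = 0)}
        = {((m : ℤ), 0), (-(m : ℤ), 0)} := by
      ext ⟨x, y⟩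
      simp only [Set.mem_setOf_eq, Set.mem_insert_iff, Set.mem_singleton_iff, Prod.ext_iff]
      constructor
      · rintro ⟨heq, (rfl | rfl)⟩
        · exfalso
          push_cast at heq
          have h3 : 3 * y.natAbs ^ 2 = m ^ 2 := by
            have : 3 * ((y.natAbs : ℤ)) ^ 2 = ((m : ℤ)) ^ 2 := by
              rw [natAbs_sq']; linarith
            exact_mod_cast this
          exact absurd (aux3 _ _ h3).2 (by omega)
        · push_cast at heq
          have h2 : (x - m) * (x + m) = 0 := by linear_combination heq
          rcases mul_eq_zero.mp h2 with h3 | h3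
          · exact Or.inl ⟨by omega, rfl⟩
          · exact Or.inr ⟨by omega, rfl⟩
      · rintro (⟨rfl, rfl⟩ | ⟨rfl, rfl⟩) <;> exact ⟨by push_cast; ring, Or.inr rfl⟩
    rw [hset]
    exact Set.ncard_pair (by simp only [ne_eq, Prod.ext_iff]; intro hp; omega)
  · have hset : {p : ℤ × ℤ | (p.1 ^ 2 + 3 * p.2 ^ 2 = ((3 * m ^ 2 : ℕ) : ℤ)) ∧ (p.1 = 0 ∨ p.2 = 0)}
        = {(0, (m : ℤ)), (0, -(m : ℤ))} := by
      ext ⟨x, y⟩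
      simp only [Set.mem_setOf_eq, Set.mem_insert_iff, Set.mem_singleton_iff, Prod.ext_iff]
      constructor
      · rintro ⟨heq, (rfl | rfl)⟩
        · push_cast at heq
          have h3 : y ^ 2 = ((m : ℤ)) ^ 2 := by linarith
          have h2 : (y - m) * (y + m) = 0 := by linear_combination h3
          rcases mul_eq_zero.mp h2 with h3 | h3
          · exact Or.inl ⟨rfl, by omega⟩
          · exact Or.inr ⟨rfl, by omega⟩
        · exfalso
          push_cast at heq
          have h3 : 3 * m ^ 2 = x.natAbs ^ 2 := by
            have : 3 * ((m : ℤ)) ^ 2 = ((x.natAbs : ℤ)) ^ 2 := by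
              rw [natAbs_sq']; linarith
            exact_mod_cast this
          exact absurd (aux3 _ _ h3).1 (by omega)
      · rintro (⟨rfl, rfl⟩ | ⟨rfl, rfl⟩) <;> exact ⟨by push_cast; ring, Or.inl rfl⟩
    rw [hset]
    exact Set.ncard_pair (by simp only [ne_eq, Prod.ext_iff]; intro hp; omega)
end

section
/- Let k be a positive integer. If k is even, then N₁,₁,₂(k) = N₃(2k); if k is odd, then 3·N₁,₁,₂(k) = N₃(2k). -/
noncomputable def N3 (k : ℕ) : ℕ := {t : ℤ × ℤ × ℤ | t.1 ^ 2 + t.2.1 ^ 2 + t.2.2 ^ 2 = (k : ℤ)}.ncard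

noncomputable def N112 (k : ℕ) : ℕ := {t : ℤ × ℤ × ℤ | t.1 ^ 2 + t.2.1 ^ 2 + 2 * t.2.2 ^ 2 = (k : ℤ)}.ncard

private lemma sq4 (a : ℤ) : (Even a ∧ a ^ 2 % 4 = 0) ∨ (¬ Even a ∧ a ^ 2 % 4 = 1) := by
  rcases Int.even_or_odd a with ⟨p, rfl⟩ | ⟨p, rfl⟩
  · left
    refine ⟨⟨p, rfl⟩, ?_⟩
    have h : (p + p) ^ 2 = p ^ 2 * 4 := by ring
    rw [h, Int.mul_emod_left]
  · right
    constructor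
    · rintro ⟨q, hq⟩; omega
    · have h : (2 * p + 1) ^ 2 = 1 + (p ^ 2 + p) * 4 := by ring
      rw [h, Int.add_mul_emod_self_right]; norm_num

private lemma parity_odd (k a b c : ℤ) (hk : Odd k) (h : a ^ 2 + b ^ 2 + c ^ 2 = 2 * k) :
    (Even a ∧ ¬Even b ∧ ¬Even c) ∨ (¬Even a ∧ Even b ∧ ¬Even c) ∨
      (¬Even a ∧ ¬Even b ∧ Even c) := by
  have hk2 : k % 2 = 1 := Int.odd_iff.mp hk
  rcases sq4 a with ⟨ha, ha4⟩ | ⟨ha, ha4⟩ <;>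
    rcases sq4 b with ⟨hb, hb4⟩ | ⟨hb, hb4⟩ <;>
      rcases sq4 c with ⟨hc, hc4⟩ | ⟨hc, hc4⟩
  all_goals try tauto
  all_goals exfalso
  all_goals (
    generalize hA : a ^ 2 = A at h ha4
    generalize hB : b ^ 2 = B at h hb4
    generalize hC : c ^ 2 = C at h hc4
    omega)

private lemma parity_even (k a b c : ℤ) (hk : Even k) (h : a ^ 2 + b ^ 2 + c ^ 2 = 2 * k) :
    Even a ∧ Even b ∧ Even c := by
  have hk2 : k % 2 = 0 := Int.even_iff.mp hk
  rcases sq4 a with ⟨ha, ha4⟩ | ⟨ha, ha4⟩ <;>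
    rcases sq4 b with ⟨hb, hb4⟩ | ⟨hb, hb4⟩ <;>
      rcases sq4 c with ⟨hc, hc4⟩ | ⟨hc, hc4⟩
  all_goals try tauto
  all_goals exfalso
  all_goals (
    generalize hA : a ^ 2 = A at h ha4
    generalize hB : b ^ 2 = B at h hb4
    generalize hC : c ^ 2 = C at h hc4
    omega)

private lemma abs_le_of_sq_le {x n : ℤ} (h : x ^ 2 ≤ n) : -n ≤ x ∧ x ≤ n := by
  constructor <;> nlinarith [sq_nonneg x, sq_nonneg (x - 1), sq_nonneg (x + 1)]

private lemma fin_aux (c n : ℤ) (hc : 0 < c) :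
    {t : ℤ × ℤ × ℤ | t.1 ^ 2 + t.2.1 ^ 2 + c * t.2.2 ^ 2 = n}.Finite := by
  apply Set.Finite.subset
    (Set.Finite.prod (Set.finite_Icc (-n) n)
      (Set.Finite.prod (Set.finite_Icc (-n) n) (Set.finite_Icc (-n) n)))
  rintro ⟨x, y, z⟩ hx
  simp only [Set.mem_setOf_eq] at hx
  have hz0 : 0 ≤ c * z ^ 2 := mul_nonneg hc.le (sq_nonneg z)
  have hz1 : z ^ 2 ≤ c * z ^ 2 := by nlinarith [sq_nonneg z]
  have h1 := abs_le_of_sq_le (show x ^ 2 ≤ n by nlinarith [sq_nonneg y])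
  have h2 := abs_le_of_sq_le (show y ^ 2 ≤ n by nlinarith [sq_nonneg x])
  have h3 := abs_le_of_sq_le (show z ^ 2 ≤ n by nlinarith [sq_nonneg x, sq_nonneg y])
  simp only [Set.mem_prod, Set.mem_Icc]
  exact ⟨h1, h2, h3⟩

private def tmap : ℤ × ℤ × ℤ → ℤ × ℤ × ℤ := fun t => (t.1 + t.2.1, t.1 - t.2.1, 2 * t.2.2)

private lemma tmap_inj : Function.Injective tmap := by
  rintro ⟨a, b, c⟩ ⟨d, e, f⟩ h
  simp only [tmap, Prod.mk.injEq] at h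
  simp only [Prod.mk.injEq]
  omega

private lemma tmap_image (k : ℤ) :
    tmap '' {t : ℤ × ℤ × ℤ | t.1 ^ 2 + t.2.1 ^ 2 + 2 * t.2.2 ^ 2 = k} =
      {t : ℤ × ℤ × ℤ | (t.1 ^ 2 + t.2.1 ^ 2 + t.2.2 ^ 2 = 2 * k) ∧ Even t.2.2} := by
  ext ⟨a, b, c⟩
  constructor
  · rintro ⟨⟨x, y, z⟩, hxyz, heq⟩
    simp only [tmap, Prod.mk.injEq] at heq
    obtain ⟨rfl, rfl, rfl⟩ := heq
    simp only [Set.mem_setOf_eq] at hxyz ⊢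
    refine ⟨by linear_combination 2 * hxyz, ⟨z, by ring⟩⟩
  · rintro ⟨h1, hc⟩
    obtain ⟨z, rfl⟩ := hc
    simp only [Set.mem_setOf_eq] at h1
    have hab : Even (a + b) := by
      have h2 : Even (a ^ 2 + b ^ 2) := ⟨k - 2 * z ^ 2, by linear_combination h1⟩
      rw [Int.even_add] at h2 ⊢
      simpa [Int.even_pow] using h2
    obtain ⟨u, hu⟩ := hab
    have hb : b = u + u - a := by omega
    subst hb
    refine ⟨(u, a - u, z), ?_, ?_⟩
    · simp only [Set.mem_setOf_eq]
      have h2 : 2 * (u ^ 2 + (a - u) ^ 2 + 2 * z ^ 2) = 2 * k := by linear_combination h1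
      linarith
    · simp only [tmap, Prod.mk.injEq]
      refine ⟨by ring, by ring, by ring⟩

private def sw13 : ℤ × ℤ × ℤ → ℤ × ℤ × ℤ := fun t => (t.2.2, t.2.1, t.1)
private def sw23 : ℤ × ℤ × ℤ → ℤ × ℤ × ℤ := fun t => (t.1, t.2.2, t.2.1)

private lemma sw13_inj : Function.Injective sw13 := by
  rintro ⟨a, b, c⟩ ⟨d, e, f⟩ h
  simp only [sw13, Prod.mk.injEq] at h ⊢
  omega

private lemma sw23_inj : Function.Injective sw23 := by
  rintro ⟨a, b, c⟩ ⟨d, e, f⟩ h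
  simp only [sw23, Prod.mk.injEq] at h ⊢
  omega

private lemma sw13_image (m : ℤ) :
    sw13 '' {t : ℤ × ℤ × ℤ | (t.1 ^ 2 + t.2.1 ^ 2 + t.2.2 ^ 2 = m) ∧ Even t.2.2} =
      {t : ℤ × ℤ × ℤ | (t.1 ^ 2 + t.2.1 ^ 2 + t.2.2 ^ 2 = m) ∧ Even t.1} := by
  ext ⟨a, b, c⟩
  constructor
  · rintro ⟨⟨x, y, z⟩, ⟨hm, he⟩, heq⟩
    simp only [sw13, Prod.mk.injEq] at heq
    obtain ⟨rfl, rfl, rfl⟩ := heq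
    simp only [Set.mem_setOf_eq] at hm ⊢
    exact ⟨by linear_combination hm, he⟩
  · rintro ⟨hm, he⟩
    simp only [Set.mem_setOf_eq] at hm
    exact ⟨(c, b, a), ⟨by linear_combination hm, he⟩, rfl⟩

private lemma sw23_image (m : ℤ) :
    sw23 '' {t : ℤ × ℤ × ℤ | (t.1 ^ 2 + t.2.1 ^ 2 + t.2.2 ^ 2 = m) ∧ Even t.2.2} =
      {t : ℤ × ℤ × ℤ | (t.1 ^ 2 + t.2.1 ^ 2 + t.2.2 ^ 2 = m) ∧ Even t.2.1} := by
  ext ⟨a, b, c⟩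
  constructor
  · rintro ⟨⟨x, y, z⟩, ⟨hm, he⟩, heq⟩
    simp only [sw23, Prod.mk.injEq] at heq
    obtain ⟨rfl, rfl, rfl⟩ := heq
    simp only [Set.mem_setOf_eq] at hm ⊢
    exact ⟨by linear_combination hm, he⟩
  · rintro ⟨hm, he⟩
    simp only [Set.mem_setOf_eq] at hm
    exact ⟨(a, c, b), ⟨by linear_combination hm, he⟩, rfl⟩

theorem stmt7 (k : ℕ) (hk : 0 < k) :
    (Even k → N112 k = N3 (2 * k)) ∧ (Odd k → 3 * N112 k = N3 (2 * k)) := by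
  have hcast : ((2 * k : ℕ) : ℤ) = 2 * (k : ℤ) := by push_cast; ring
  have hN3 : N3 (2 * k) =
      {t : ℤ × ℤ × ℤ | t.1 ^ 2 + t.2.1 ^ 2 + t.2.2 ^ 2 = 2 * (k : ℤ)}.ncard := by
    unfold N3; rw [hcast]
  have hSc : {t : ℤ × ℤ × ℤ |
        (t.1 ^ 2 + t.2.1 ^ 2 + t.2.2 ^ 2 = 2 * (k : ℤ)) ∧ Even t.2.2}.ncard = N112 k := by
    rw [← tmap_image (k : ℤ), Set.ncard_image_of_injective _ tmap_inj]; rfl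
  have hS_fin : {t : ℤ × ℤ × ℤ | t.1 ^ 2 + t.2.1 ^ 2 + t.2.2 ^ 2 = 2 * (k : ℤ)}.Finite := by
    have h := fin_aux 1 (2 * (k : ℤ)) one_pos
    simpa using h
  constructor
  · intro hke
    have hkeZ : Even ((k : ℤ)) := by exact_mod_cast hke
    have hseq : {t : ℤ × ℤ × ℤ | t.1 ^ 2 + t.2.1 ^ 2 + t.2.2 ^ 2 = 2 * (k : ℤ)} =
        {t : ℤ × ℤ × ℤ | (t.1 ^ 2 + t.2.1 ^ 2 + t.2.2 ^ 2 = 2 * (k : ℤ)) ∧ Even t.2.2} := by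
      ext ⟨a, b, c⟩
      simp only [Set.mem_setOf_eq]
      exact ⟨fun h => ⟨h, (parity_even _ a b c hkeZ h).2.2⟩, fun h => h.1⟩
    rw [hN3, hseq, hSc]
  · intro hko
    have hkoZ : Odd ((k : ℤ)) := by exact_mod_cast hko
    have hsplit : {t : ℤ × ℤ × ℤ | t.1 ^ 2 + t.2.1 ^ 2 + t.2.2 ^ 2 = 2 * (k : ℤ)} =
        ({t : ℤ × ℤ × ℤ | (t.1 ^ 2 + t.2.1 ^ 2 + t.2.2 ^ 2 = 2 * (k : ℤ)) ∧ Even t.1} ∪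
          {t : ℤ × ℤ × ℤ | (t.1 ^ 2 + t.2.1 ^ 2 + t.2.2 ^ 2 = 2 * (k : ℤ)) ∧ Even t.2.1}) ∪
          {t : ℤ × ℤ × ℤ | (t.1 ^ 2 + t.2.1 ^ 2 + t.2.2 ^ 2 = 2 * (k : ℤ)) ∧ Even t.2.2} := by
      ext ⟨a, b, c⟩
      simp only [Set.mem_union, Set.mem_setOf_eq]
      constructor
      · intro h
        rcases parity_odd _ a b c hkoZ h with ⟨h1, _, _⟩ | ⟨_, h1, _⟩ | ⟨_, _, h1⟩
        · exact Or.inl (Or.inl ⟨h, h1⟩)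
        · exact Or.inl (Or.inr ⟨h, h1⟩)
        · exact Or.inr ⟨h, h1⟩
      · rintro ((⟨h, -⟩ | ⟨h, -⟩) | ⟨h, -⟩) <;> exact h
    have hfa := hS_fin.subset (fun t (ht : _ ∧ Even t.1) => ht.1)
    have hfb := hS_fin.subset (fun t (ht : _ ∧ Even t.2.1) => ht.1)
    have hfc := hS_fin.subset (fun t (ht : _ ∧ Even t.2.2) => ht.1)
    have hd1 : Disjoint
        {t : ℤ × ℤ × ℤ | (t.1 ^ 2 + t.2.1 ^ 2 + t.2.2 ^ 2 = 2 * (k : ℤ)) ∧ Even t.1}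
        {t : ℤ × ℤ × ℤ | (t.1 ^ 2 + t.2.1 ^ 2 + t.2.2 ^ 2 = 2 * (k : ℤ)) ∧ Even t.2.1} := by
      rw [Set.disjoint_left]
      rintro ⟨a, b, c⟩ ⟨hm, he⟩ ⟨-, he'⟩
      rcases parity_odd _ a b c hkoZ hm with h | h | h <;> tauto
    have hd2 : Disjoint
        ({t : ℤ × ℤ × ℤ | (t.1 ^ 2 + t.2.1 ^ 2 + t.2.2 ^ 2 = 2 * (k : ℤ)) ∧ Even t.1} ∪
          {t : ℤ × ℤ × ℤ | (t.1 ^ 2 + t.2.1 ^ 2 + t.2.2 ^ 2 = 2 * (k : ℤ)) ∧ Even t.2.1})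
        {t : ℤ × ℤ × ℤ | (t.1 ^ 2 + t.2.1 ^ 2 + t.2.2 ^ 2 = 2 * (k : ℤ)) ∧ Even t.2.2} := by
      rw [Set.disjoint_left]
      rintro ⟨a, b, c⟩ (⟨hm, he⟩ | ⟨hm, he⟩) ⟨-, he'⟩ <;>
        rcases parity_odd _ a b c hkoZ hm with h | h | h <;> tauto
    have ha : {t : ℤ × ℤ × ℤ |
          (t.1 ^ 2 + t.2.1 ^ 2 + t.2.2 ^ 2 = 2 * (k : ℤ)) ∧ Even t.1}.ncard =
        {t : ℤ × ℤ × ℤ |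
          (t.1 ^ 2 + t.2.1 ^ 2 + t.2.2 ^ 2 = 2 * (k : ℤ)) ∧ Even t.2.2}.ncard := by
      rw [← sw13_image, Set.ncard_image_of_injective _ sw13_inj]
    have hb : {t : ℤ × ℤ × ℤ |
          (t.1 ^ 2 + t.2.1 ^ 2 + t.2.2 ^ 2 = 2 * (k : ℤ)) ∧ Even t.2.1}.ncard =
        {t : ℤ × ℤ × ℤ |
          (t.1 ^ 2 + t.2.1 ^ 2 + t.2.2 ^ 2 = 2 * (k : ℤ)) ∧ Even t.2.2}.ncard := by
      rw [← sw23_image, Set.ncard_image_of_injective _ sw23_inj]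
    rw [hN3, hsplit, Set.ncard_union_eq hd2 (hfa.union hfb) hfc,
      Set.ncard_union_eq hd1 hfa hfb, ha, hb, hSc]
    ring
end

section
/- Let k be a positive integer such that k ≠ m², k ≠ 2m², k ≠ 3m², and k ≠ 4m² for every positive integer m. Then 16·L₁,₁,₂(k) = N₁,₁,₂(k) − 8·L₂(k) − 8·L₁,₂(k) − 16·L₁,₃(k) − 16·L₂(k/2), where L₂(k/2) is interpreted as 0 when k is odd. -/
noncomputable def L112 (k : ℕ) : ℕ := {t : ℕ × ℕ × ℕ | 0 < t.1 ∧ 0 < t.2.2 ∧ t.1 < t.2.1 ∧ t.1 ≠ t.2.2 ∧ t.2.1 ≠ t.2.2 ∧ t.1 ^ 2 + t.2.1 ^ 2 + 2 * t.2.2 ^ 2 = k}.ncard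

noncomputable def L2 (k : ℕ) : ℕ := {p : ℕ × ℕ | 0 < p.1 ∧ p.1 < p.2 ∧ p.1 ^ 2 + p.2 ^ 2 = k}.ncard

noncomputable def L2half (k : ℕ) : ℕ := if k % 2 = 0 then L2 (k / 2) else 0


open Finset

def Ifin (a : ℕ) : Finset ℤ := if a = 0 then {0} else {(a:ℤ), -(a:ℤ)}

lemma mem_Ifin {a : ℕ} {x : ℤ} : x ∈ Ifin a ↔ x.natAbs = a := by
  unfold Ifin
  split <;> simp_all <;> omega

lemma card_Ifin (a : ℕ) : (Ifin a).card = if a = 0 then 1 else 2 := by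
  unfold Ifin
  split
  · simp
  · rename_i ha
    rw [card_insert_of_notMem (by simp; omega), card_singleton]

noncomputable def Sfin (k : ℕ) : Finset (ℤ×ℤ×ℤ) :=
  (Icc (-(k:ℤ)) k ×ˢ Icc (-(k:ℤ)) k ×ˢ Icc (-(k:ℤ)) k).filter
    (fun t => t.1^2 + t.2.1^2 + 2*t.2.2^2 = (k:ℤ))

def Afin (k : ℕ) : Finset (ℕ×ℕ×ℕ) :=
  (range (k+1) ×ˢ range (k+1) ×ˢ range (k+1)).filter
    (fun t => t.1^2 + t.2.1^2 + 2*t.2.2^2 = k)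

lemma nat_bound {a k : ℕ} (h : a^2 ≤ k) : a < k + 1 := by nlinarith

lemma int_bound {x : ℤ} {k : ℕ} (hk : 0 < k) (h : x^2 ≤ (k:ℤ)) : -(k:ℤ) ≤ x ∧ x ≤ k := by
  have hk' : (1:ℤ) ≤ k := by exact_mod_cast hk
  constructor <;> nlinarith

lemma mem_Afin {k : ℕ} {t : ℕ×ℕ×ℕ} :
    t ∈ Afin k ↔ t.1^2 + t.2.1^2 + 2*t.2.2^2 = k := by
  unfold Afin
  simp only [mem_filter, mem_product, mem_range]
  constructor
  · tauto
  · intro he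
    refine ⟨⟨nat_bound ?_, nat_bound ?_, nat_bound ?_⟩, he⟩ <;> nlinarith

lemma mem_Sfin {k : ℕ} (hk : 0 < k) {t : ℤ×ℤ×ℤ} :
    t ∈ Sfin k ↔ t.1^2 + t.2.1^2 + 2*t.2.2^2 = (k:ℤ) := by
  unfold Sfin
  simp only [mem_filter, mem_product, mem_Icc]
  constructor
  · tauto
  · intro he
    have h1 := int_bound hk (show t.1^2 ≤ (k:ℤ) by nlinarith [sq_nonneg t.2.1, sq_nonneg t.2.2])
    have h2 := int_bound hk (show t.2.1^2 ≤ (k:ℤ) by nlinarith [sq_nonneg t.1, sq_nonneg t.2.2])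
    have h3 := int_bound hk (show t.2.2^2 ≤ (k:ℤ) by nlinarith [sq_nonneg t.1, sq_nonneg t.2.1])
    exact ⟨⟨⟨h1.1, h1.2⟩, ⟨h2.1, h2.2⟩, h3.1, h3.2⟩, he⟩

lemma N112_eq (k : ℕ) (hk : 0 < k) : N112 k = (Sfin k).card := by
  rw [N112]
  rw [show {t : ℤ × ℤ × ℤ | t.1 ^ 2 + t.2.1 ^ 2 + 2 * t.2.2 ^ 2 = (k : ℤ)} = ↑(Sfin k) by
    ext t; simp [mem_Sfin hk]]
  exact Set.ncard_coe_finset _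

lemma card_Sfin (k : ℕ) (hk : 0 < k) :
    (Sfin k).card = ∑ t ∈ Afin k,
      ((if t.1 = 0 then 1 else 2) * ((if t.2.1 = 0 then 1 else 2) * (if t.2.2 = 0 then 1 else 2))) := by
  rw [Finset.card_eq_sum_card_fiberwise
    (f := fun t : ℤ×ℤ×ℤ => (t.1.natAbs, t.2.1.natAbs, t.2.2.natAbs)) (t := Afin k)]
  · refine Finset.sum_congr rfl (fun t ht => ?_)
    obtain ⟨a, b, c⟩ := t
    rw [mem_Afin] at ht
    have : (Sfin k).filter (fun x => (x.1.natAbs, x.2.1.natAbs, x.2.2.natAbs) = (a,b,c))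
        = Ifin a ×ˢ Ifin b ×ˢ Ifin c := by
      ext ⟨x, y, z⟩
      simp only [mem_filter, mem_product, mem_Ifin, mem_Sfin hk, Prod.mk.injEq]
      constructor
      · rintro ⟨-, h1, h2, h3⟩; exact ⟨h1, h2, h3⟩
      · rintro ⟨h1, h2, h3⟩
        refine ⟨?_, h1, h2, h3⟩
        have e1 : x^2 = ((a : ℤ))^2 := by rw [← h1, Int.natAbs_sq]
        have e2 : y^2 = ((b : ℤ))^2 := by rw [← h2, Int.natAbs_sq]
        have e3 : z^2 = ((c : ℤ))^2 := by rw [← h3, Int.natAbs_sq]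
        rw [e1, e2, e3]
        exact_mod_cast congrArg (Nat.cast : ℕ → ℤ) ht
    rw [this, card_product, card_product, card_Ifin, card_Ifin, card_Ifin]
  · intro x hx
    rw [Finset.mem_coe, mem_Sfin hk] at hx
    rw [Finset.mem_coe, mem_Afin]
    have : ((x.1.natAbs^2 + x.2.1.natAbs^2 + 2*x.2.2.natAbs^2 : ℕ) : ℤ) = (k:ℤ) := by
      push_cast
      simp only [sq_abs]
      linarith [hx]
    exact_mod_cast this

def P2fin (k : ℕ) : Finset (ℕ×ℕ) :=
  (range (k+1) ×ˢ range (k+1)).filter (fun p => 0 < p.1 ∧ p.1 < p.2 ∧ p.1^2 + p.2^2 = k)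

def P12fin (k : ℕ) : Finset (ℕ×ℕ) :=
  (range (k+1) ×ˢ range (k+1)).filter (fun p => 0 < p.1 ∧ 0 < p.2 ∧ p.1 ≠ p.2 ∧ p.1^2 + 2*p.2^2 = k)

def P13fin (k : ℕ) : Finset (ℕ×ℕ) :=
  (range (k+1) ×ˢ range (k+1)).filter (fun p => 0 < p.1 ∧ 0 < p.2 ∧ p.1 ≠ p.2 ∧ p.1^2 + 3*p.2^2 = k)

def L112fin (k : ℕ) : Finset (ℕ×ℕ×ℕ) :=
  (range (k+1) ×ˢ range (k+1) ×ˢ range (k+1)).filter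
    (fun t => 0 < t.1 ∧ 0 < t.2.2 ∧ t.1 < t.2.1 ∧ t.1 ≠ t.2.2 ∧ t.2.1 ≠ t.2.2 ∧
      t.1^2 + t.2.1^2 + 2*t.2.2^2 = k)

lemma mem_P2fin {k : ℕ} {p : ℕ×ℕ} :
    p ∈ P2fin k ↔ 0 < p.1 ∧ p.1 < p.2 ∧ p.1^2 + p.2^2 = k := by
  unfold P2fin
  simp only [mem_filter, mem_product, mem_range]
  refine ⟨fun h => h.2, fun h => ⟨⟨nat_bound ?_, nat_bound ?_⟩, h⟩⟩ <;>
    obtain ⟨-, -, he⟩ := h <;> nlinarith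

lemma mem_P12fin {k : ℕ} {p : ℕ×ℕ} :
    p ∈ P12fin k ↔ 0 < p.1 ∧ 0 < p.2 ∧ p.1 ≠ p.2 ∧ p.1^2 + 2*p.2^2 = k := by
  unfold P12fin
  simp only [mem_filter, mem_product, mem_range]
  refine ⟨fun h => h.2, fun h => ⟨⟨nat_bound ?_, nat_bound ?_⟩, h⟩⟩ <;>
    obtain ⟨-, -, -, he⟩ := h <;> nlinarith

lemma mem_P13fin {k : ℕ} {p : ℕ×ℕ} :
    p ∈ P13fin k ↔ 0 < p.1 ∧ 0 < p.2 ∧ p.1 ≠ p.2 ∧ p.1^2 + 3*p.2^2 = k := by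
  unfold P13fin
  simp only [mem_filter, mem_product, mem_range]
  refine ⟨fun h => h.2, fun h => ⟨⟨nat_bound ?_, nat_bound ?_⟩, h⟩⟩ <;>
    obtain ⟨-, -, -, he⟩ := h <;> nlinarith

lemma mem_L112fin {k : ℕ} {t : ℕ×ℕ×ℕ} :
    t ∈ L112fin k ↔ 0 < t.1 ∧ 0 < t.2.2 ∧ t.1 < t.2.1 ∧ t.1 ≠ t.2.2 ∧ t.2.1 ≠ t.2.2 ∧
      t.1^2 + t.2.1^2 + 2*t.2.2^2 = k := by
  unfold L112fin
  simp only [mem_filter, mem_product, mem_range]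
  refine ⟨fun h => h.2, fun h => ⟨⟨nat_bound ?_, nat_bound ?_, nat_bound ?_⟩, h⟩⟩ <;>
    obtain ⟨-, -, -, -, -, he⟩ := h <;> nlinarith

lemma L2_eq (k : ℕ) : L2 k = (P2fin k).card := by
  rw [L2, show {p : ℕ × ℕ | 0 < p.1 ∧ p.1 < p.2 ∧ p.1 ^ 2 + p.2 ^ 2 = k} = ↑(P2fin k) by
    ext p; simp [mem_P2fin]]
  exact Set.ncard_coe_finset _

lemma L12_eq (k : ℕ) : L12 k = (P12fin k).card := by
  rw [L12, show {p : ℕ × ℕ | 0 < p.1 ∧ 0 < p.2 ∧ p.1 ≠ p.2 ∧ p.1 ^ 2 + 2 * p.2 ^ 2 = k} = ↑(P12fin k) by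
    ext p; simp [mem_P12fin]]
  exact Set.ncard_coe_finset _

lemma L13_eq (k : ℕ) : L13 k = (P13fin k).card := by
  rw [L13, show {p : ℕ × ℕ | 0 < p.1 ∧ 0 < p.2 ∧ p.1 ≠ p.2 ∧ p.1 ^ 2 + 3 * p.2 ^ 2 = k} = ↑(P13fin k) by
    ext p; simp [mem_P13fin]]
  exact Set.ncard_coe_finset _

lemma L112_eq (k : ℕ) : L112 k = (L112fin k).card := by
  rw [L112, show {t : ℕ × ℕ × ℕ | 0 < t.1 ∧ 0 < t.2.2 ∧ t.1 < t.2.1 ∧ t.1 ≠ t.2.2 ∧ t.2.1 ≠ t.2.2 ∧ t.1 ^ 2 + t.2.1 ^ 2 + 2 * t.2.2 ^ 2 = k} = ↑(L112fin k) by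
    ext t; simp [mem_L112fin]]
  exact Set.ncard_coe_finset _

lemma partA2 (k : ℕ) (hk : 0 < k)
    (h : ∀ m : ℕ, 0 < m → k ≠ m ^ 2 ∧ k ≠ 2 * m ^ 2 ∧ k ≠ 3 * m ^ 2 ∧ k ≠ 4 * m ^ 2) :
    ∑ t ∈ (Afin k).filter (fun t => t.2.2 = 0),
      ((if t.1 = 0 then 1 else 2) * ((if t.2.1 = 0 then 1 else 2) * (if t.2.2 = 0 then 1 else 2)))
      = 8 * L2 k := by
  have key : ∀ a b : ℕ, a^2 + b^2 = k → 0 < a ∧ 0 < b ∧ a ≠ b := by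
    intro a b heq
    have ha : 0 < a := by
      rcases Nat.eq_zero_or_pos a with rfl | ha
      · have hb2 : b^2 = k := by simpa using heq
        rcases Nat.eq_zero_or_pos b with rfl | hb
        · simp at hb2; omega
        · exact absurd hb2.symm (h b hb).1
      · exact ha
    have hb : 0 < b := by
      rcases Nat.eq_zero_or_pos b with rfl | hb
      · have ha2 : a^2 = k := by simpa using heq
        exact absurd ha2.symm (h a ha).1
      · exact hb
    refine ⟨ha, hb, ?_⟩
    rintro rfl
    exact (h a ha).2.1 (by linarith)
  have hconst : ∀ t ∈ (Afin k).filter (fun t : ℕ×ℕ×ℕ => t.2.2 = 0),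
      ((if t.1 = 0 then 1 else 2) * ((if t.2.1 = 0 then 1 else 2) * (if t.2.2 = 0 then 1 else 2))) = 4 := by
    rintro ⟨a, b, c⟩ ht
    simp only [mem_filter, mem_Afin] at ht
    obtain ⟨heq, rfl⟩ := ht
    have heq' : a^2 + b^2 = k := by simpa using heq
    obtain ⟨ha, hb, -⟩ := key a b heq'
    have : a ≠ 0 := by omega
    have : b ≠ 0 := by omega
    simp [*]
  rw [Finset.sum_congr rfl hconst, Finset.sum_const, smul_eq_mul]
  have hset : (Afin k).filter (fun t : ℕ×ℕ×ℕ => t.2.2 = 0)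
      = (P2fin k).image (fun p => (p.1, p.2, 0)) ∪ (P2fin k).image (fun p => (p.2, p.1, 0)) := by
    ext ⟨a, b, c⟩
    simp only [mem_filter, mem_Afin, mem_union, mem_image, mem_P2fin, Prod.mk.injEq]
    constructor
    · rintro ⟨heq, rfl⟩
      have heq' : a^2 + b^2 = k := by simpa using heq
      obtain ⟨ha, hb, hab⟩ := key a b heq'
      rcases lt_or_gt_of_ne hab with hlt | hgt
      · exact Or.inl ⟨(a, b), ⟨ha, hlt, heq'⟩, rfl, rfl, rfl⟩
      · exact Or.inr ⟨(b, a), ⟨hb, hgt, by linarith⟩, rfl, rfl, rfl⟩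
    · rintro (⟨⟨u, v⟩, ⟨h1, h2, h3⟩, rfl, rfl, rfl⟩ | ⟨⟨u, v⟩, ⟨h1, h2, h3⟩, rfl, rfl, rfl⟩) <;>
        exact ⟨by simp; linarith, rfl⟩
  have hinj1 : Set.InjOn (fun p : ℕ×ℕ => ((p.1, p.2, 0) : ℕ×ℕ×ℕ)) (P2fin k) := by
    intro p _ q _ hpq
    simp only [Prod.mk.injEq] at hpq
    exact Prod.ext hpq.1 hpq.2.1
  have hinj2 : Set.InjOn (fun p : ℕ×ℕ => ((p.2, p.1, 0) : ℕ×ℕ×ℕ)) (P2fin k) := by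
    intro p _ q _ hpq
    simp only [Prod.mk.injEq] at hpq
    exact Prod.ext hpq.2.1 hpq.1
  have hdisj : Disjoint ((P2fin k).image (fun p => (p.1, p.2, 0)))
      ((P2fin k).image (fun p => (p.2, p.1, 0))) := by
    rw [Finset.disjoint_left]
    rintro ⟨a, b, c⟩ h1 h2
    simp only [mem_image, mem_P2fin, Prod.mk.injEq] at h1 h2
    obtain ⟨⟨u, v⟩, ⟨-, huv, -⟩, rfl, rfl, -⟩ := h1
    obtain ⟨⟨u', v'⟩, ⟨-, huv', -⟩, h1', h2', -⟩ := h2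
    omega
  rw [hset, card_union_of_disjoint hdisj, Finset.card_image_of_injOn hinj1,
    Finset.card_image_of_injOn hinj2, L2_eq]
  ring

lemma partA3 (k : ℕ) (hk : 0 < k)
    (h : ∀ m : ℕ, 0 < m → k ≠ m ^ 2 ∧ k ≠ 2 * m ^ 2 ∧ k ≠ 3 * m ^ 2 ∧ k ≠ 4 * m ^ 2) :
    ∑ t ∈ (Afin k).filter (fun t => ¬t.2.2 = 0 ∧ (t.1 = 0 ∨ t.2.1 = 0)),
      ((if t.1 = 0 then 1 else 2) * ((if t.2.1 = 0 then 1 else 2) * (if t.2.2 = 0 then 1 else 2)))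
      = 8 * L12 k := by
  have key : ∀ a c : ℕ, a^2 + 2*c^2 = k → 0 < c → 0 < a ∧ a ≠ c := by
    intro a c heq hc
    have ha : 0 < a := by
      rcases Nat.eq_zero_or_pos a with rfl | ha
      · exact absurd (show k = 2 * c^2 by linarith) (h c hc).2.1
      · exact ha
    refine ⟨ha, ?_⟩
    rintro rfl
    exact (h a ha).2.2.1 (by linarith)
  have hconst : ∀ t ∈ (Afin k).filter (fun t : ℕ×ℕ×ℕ => ¬t.2.2 = 0 ∧ (t.1 = 0 ∨ t.2.1 = 0)),
      ((if t.1 = 0 then 1 else 2) * ((if t.2.1 = 0 then 1 else 2) * (if t.2.2 = 0 then 1 else 2))) = 4 := by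
    rintro ⟨a, b, c⟩ ht
    simp only [mem_filter, mem_Afin] at ht
    obtain ⟨heq, hc, hab⟩ := ht
    have hc' : 0 < c := by omega
    rcases hab with rfl | rfl
    · have hb : 0 < b := (key b c (by linarith) hc').1
      have : b ≠ 0 := by omega
      simp [*]
    · have ha : 0 < a := (key a c (by linarith) hc').1
      have : a ≠ 0 := by omega
      simp [*]
  rw [Finset.sum_congr rfl hconst, Finset.sum_const, smul_eq_mul]
  have hset : (Afin k).filter (fun t : ℕ×ℕ×ℕ => ¬t.2.2 = 0 ∧ (t.1 = 0 ∨ t.2.1 = 0))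
      = (P12fin k).image (fun p => (p.1, 0, p.2)) ∪ (P12fin k).image (fun p => (0, p.1, p.2)) := by
    ext ⟨a, b, c⟩
    simp only [mem_filter, mem_Afin, mem_union, mem_image, mem_P12fin, Prod.mk.injEq]
    constructor
    · rintro ⟨heq, hc, hab⟩
      have hc' : 0 < c := by omega
      rcases hab with rfl | rfl
      · obtain ⟨hb, hbc⟩ := key b c (by linarith) hc'
        exact Or.inr ⟨(b, c), ⟨hb, hc', hbc, by linarith⟩, rfl, rfl, rfl⟩
      · obtain ⟨ha, hac⟩ := key a c (by linarith) hc'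
        exact Or.inl ⟨(a, c), ⟨ha, hc', hac, by linarith⟩, rfl, rfl, rfl⟩
    · rintro (⟨⟨u, v⟩, ⟨h1, h2, h3, h4⟩, rfl, rfl, rfl⟩ | ⟨⟨u, v⟩, ⟨h1, h2, h3, h4⟩, rfl, rfl, rfl⟩)
      · exact ⟨by simp; linarith, by omega, Or.inr rfl⟩
      · exact ⟨by simp; linarith, by omega, Or.inl rfl⟩
  have hinj1 : Set.InjOn (fun p : ℕ×ℕ => ((p.1, 0, p.2) : ℕ×ℕ×ℕ)) (P12fin k) := by
    intro p _ q _ hpq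
    simp only [Prod.mk.injEq] at hpq
    exact Prod.ext hpq.1 hpq.2.2
  have hinj2 : Set.InjOn (fun p : ℕ×ℕ => ((0, p.1, p.2) : ℕ×ℕ×ℕ)) (P12fin k) := by
    intro p _ q _ hpq
    simp only [Prod.mk.injEq] at hpq
    exact Prod.ext hpq.2.1 hpq.2.2
  have hdisj : Disjoint ((P12fin k).image (fun p => (p.1, 0, p.2)))
      ((P12fin k).image (fun p => (0, p.1, p.2))) := by
    rw [Finset.disjoint_left]
    rintro ⟨a, b, c⟩ h1 h2
    simp only [mem_image, mem_P12fin, Prod.mk.injEq] at h1 h2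
    obtain ⟨⟨u, v⟩, ⟨hu, -, -, -⟩, rfl, rfl, -⟩ := h1
    obtain ⟨⟨u', v'⟩, ⟨hu', -, -, -⟩, h1', h2', -⟩ := h2
    omega
  rw [hset, card_union_of_disjoint hdisj, Finset.card_image_of_injOn hinj1,
    Finset.card_image_of_injOn hinj2, L12_eq]
  ring

lemma partA4 (k : ℕ) (hk : 0 < k)
    (h : ∀ m : ℕ, 0 < m → k ≠ m ^ 2 ∧ k ≠ 2 * m ^ 2 ∧ k ≠ 3 * m ^ 2 ∧ k ≠ 4 * m ^ 2) :
    ∑ t ∈ (Afin k).filter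
        (fun t => ¬t.2.2 = 0 ∧ ¬(t.1 = 0 ∨ t.2.1 = 0) ∧ (t.1 = t.2.2 ∨ t.2.1 = t.2.2)),
      ((if t.1 = 0 then 1 else 2) * ((if t.2.1 = 0 then 1 else 2) * (if t.2.2 = 0 then 1 else 2)))
      = 16 * L13 k := by
  have key : ∀ a c : ℕ, a^2 + 3*c^2 = k → 0 < c → 0 < a → a ≠ c := by
    intro a c heq hc ha
    rintro rfl
    exact (h a ha).2.2.2 (by linarith)
  have hconst : ∀ t ∈ (Afin k).filter
      (fun t : ℕ×ℕ×ℕ => ¬t.2.2 = 0 ∧ ¬(t.1 = 0 ∨ t.2.1 = 0) ∧ (t.1 = t.2.2 ∨ t.2.1 = t.2.2)),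
      ((if t.1 = 0 then 1 else 2) * ((if t.2.1 = 0 then 1 else 2) * (if t.2.2 = 0 then 1 else 2))) = 8 := by
    rintro ⟨a, b, c⟩ ht
    simp only [mem_filter, mem_Afin] at ht
    obtain ⟨-, hc, hab, -⟩ := ht
    push_neg at hab
    simp [hc, hab.1, hab.2]
  rw [Finset.sum_congr rfl hconst, Finset.sum_const, smul_eq_mul]
  have hset : (Afin k).filter
      (fun t : ℕ×ℕ×ℕ => ¬t.2.2 = 0 ∧ ¬(t.1 = 0 ∨ t.2.1 = 0) ∧ (t.1 = t.2.2 ∨ t.2.1 = t.2.2))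
      = (P13fin k).image (fun p => (p.2, p.1, p.2)) ∪ (P13fin k).image (fun p => (p.1, p.2, p.2)) := by
    ext ⟨a, b, c⟩
    simp only [mem_filter, mem_Afin, mem_union, mem_image, mem_P13fin, Prod.mk.injEq]
    constructor
    · rintro ⟨heq, hc, hab, hor⟩
      push_neg at hab
      have ha : 0 < a := Nat.pos_of_ne_zero hab.1
      have hb : 0 < b := Nat.pos_of_ne_zero hab.2
      have hc' : 0 < c := Nat.pos_of_ne_zero hc
      rcases hor with rfl | rfl
      · have hba : b ≠ a := key b a (by linarith) ha hb
        exact Or.inl ⟨(b, a), ⟨hb, ha, hba, by linarith⟩, rfl, rfl, rfl⟩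
      · have hab' : a ≠ b := key a b (by linarith) hb ha
        exact Or.inr ⟨(a, b), ⟨ha, hb, hab', by linarith⟩, rfl, rfl, rfl⟩
    · rintro (⟨⟨u, v⟩, ⟨h1, h2, h3, h4⟩, rfl, rfl, rfl⟩ | ⟨⟨u, v⟩, ⟨h1, h2, h3, h4⟩, rfl, rfl, rfl⟩)
      · exact ⟨by linarith, by omega, by omega, Or.inl rfl⟩
      · exact ⟨by linarith, by omega, by omega, Or.inr rfl⟩
  have hinj1 : Set.InjOn (fun p : ℕ×ℕ => ((p.2, p.1, p.2) : ℕ×ℕ×ℕ)) (P13fin k) := by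
    intro p _ q _ hpq
    simp only [Prod.mk.injEq] at hpq
    exact Prod.ext hpq.2.1 hpq.1
  have hinj2 : Set.InjOn (fun p : ℕ×ℕ => ((p.1, p.2, p.2) : ℕ×ℕ×ℕ)) (P13fin k) := by
    intro p _ q _ hpq
    simp only [Prod.mk.injEq] at hpq
    exact Prod.ext hpq.1 hpq.2.1
  have hdisj : Disjoint ((P13fin k).image (fun p => (p.2, p.1, p.2)))
      ((P13fin k).image (fun p => (p.1, p.2, p.2))) := by
    rw [Finset.disjoint_left]
    rintro ⟨a, b, c⟩ h1 h2
    simp only [mem_image, mem_P13fin, Prod.mk.injEq] at h1 h2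
    obtain ⟨⟨u, v⟩, ⟨-, -, huv, -⟩, rfl, rfl, rfl⟩ := h1
    obtain ⟨⟨u', v'⟩, ⟨-, -, huv', -⟩, h1', h2', h3'⟩ := h2
    omega
  rw [hset, card_union_of_disjoint hdisj, Finset.card_image_of_injOn hinj1,
    Finset.card_image_of_injOn hinj2, L13_eq]
  ring

lemma partA5 (k : ℕ) (hk : 0 < k)
    (h : ∀ m : ℕ, 0 < m → k ≠ m ^ 2 ∧ k ≠ 2 * m ^ 2 ∧ k ≠ 3 * m ^ 2 ∧ k ≠ 4 * m ^ 2) :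
    ∑ t ∈ (Afin k).filter
        (fun t => ¬t.2.2 = 0 ∧ ¬(t.1 = 0 ∨ t.2.1 = 0) ∧ ¬(t.1 = t.2.2 ∨ t.2.1 = t.2.2) ∧ t.1 = t.2.1),
      ((if t.1 = 0 then 1 else 2) * ((if t.2.1 = 0 then 1 else 2) * (if t.2.2 = 0 then 1 else 2)))
      = 16 * L2half k := by
  by_cases hpar : k % 2 = 0
  · have hconst : ∀ t ∈ (Afin k).filter
        (fun t : ℕ×ℕ×ℕ => ¬t.2.2 = 0 ∧ ¬(t.1 = 0 ∨ t.2.1 = 0) ∧ ¬(t.1 = t.2.2 ∨ t.2.1 = t.2.2) ∧ t.1 = t.2.1),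
        ((if t.1 = 0 then 1 else 2) * ((if t.2.1 = 0 then 1 else 2) * (if t.2.2 = 0 then 1 else 2))) = 8 := by
      rintro ⟨a, b, c⟩ ht
      simp only [mem_filter, mem_Afin] at ht
      obtain ⟨-, hc, hab, -⟩ := ht
      push_neg at hab
      simp [hc, hab.1, hab.2]
    rw [Finset.sum_congr rfl hconst, Finset.sum_const, smul_eq_mul]
    have hset : (Afin k).filter
        (fun t : ℕ×ℕ×ℕ => ¬t.2.2 = 0 ∧ ¬(t.1 = 0 ∨ t.2.1 = 0) ∧ ¬(t.1 = t.2.2 ∨ t.2.1 = t.2.2) ∧ t.1 = t.2.1)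
        = (P2fin (k/2)).image (fun p => (p.1, p.1, p.2)) ∪ (P2fin (k/2)).image (fun p => (p.2, p.2, p.1)) := by
      ext ⟨a, b, c⟩
      simp only [mem_filter, mem_Afin, mem_union, mem_image, mem_P2fin, Prod.mk.injEq]
      constructor
      · rintro ⟨heq, hc, hab0, hnec, rfl⟩
        push_neg at hab0 hnec
        have ha : 0 < a := Nat.pos_of_ne_zero hab0.1
        have hc' : 0 < c := Nat.pos_of_ne_zero hc
        have hm : k = 2 * (a^2 + c^2) := by linarith
        have hhalf : k / 2 = a^2 + c^2 := by rw [hm, Nat.mul_div_cancel_left _ (by norm_num)]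
        rcases lt_or_gt_of_ne hnec.1 with hlt | hgt
        · exact Or.inl ⟨(a, c), ⟨ha, hlt, hhalf.symm⟩, rfl, rfl, rfl⟩
        · exact Or.inr ⟨(c, a), ⟨hc', hgt, by show c^2 + a^2 = k/2; linarith⟩, rfl, rfl, rfl⟩
      · have h2 : 2 * (k / 2) = k := by omega
        rintro (⟨⟨u, v⟩, ⟨h1', h2', h3'⟩, rfl, rfl, rfl⟩ | ⟨⟨u, v⟩, ⟨h1', h2', h3'⟩, rfl, rfl, rfl⟩)
        · exact ⟨by nlinarith, by omega, by omega, by omega, rfl⟩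
        · exact ⟨by nlinarith, by omega, by omega, by omega, rfl⟩
    have hinj1 : Set.InjOn (fun p : ℕ×ℕ => ((p.1, p.1, p.2) : ℕ×ℕ×ℕ)) (P2fin (k/2)) := by
      intro p _ q _ hpq
      simp only [Prod.mk.injEq] at hpq
      exact Prod.ext hpq.1 hpq.2.2
    have hinj2 : Set.InjOn (fun p : ℕ×ℕ => ((p.2, p.2, p.1) : ℕ×ℕ×ℕ)) (P2fin (k/2)) := by
      intro p _ q _ hpq
      simp only [Prod.mk.injEq] at hpq
      exact Prod.ext hpq.2.2 hpq.1
    have hdisj : Disjoint ((P2fin (k/2)).image (fun p => (p.1, p.1, p.2)))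
        ((P2fin (k/2)).image (fun p => (p.2, p.2, p.1))) := by
      rw [Finset.disjoint_left]
      rintro ⟨a, b, c⟩ h1 h2
      simp only [mem_image, mem_P2fin, Prod.mk.injEq] at h1 h2
      obtain ⟨⟨u, v⟩, ⟨-, huv, -⟩, rfl, rfl, rfl⟩ := h1
      obtain ⟨⟨u', v'⟩, ⟨-, huv', -⟩, h1', h2', h3'⟩ := h2
      omega
    rw [hset, card_union_of_disjoint hdisj, Finset.card_image_of_injOn hinj1,
      Finset.card_image_of_injOn hinj2, L2half, if_pos hpar, L2_eq]
    ring
  · have hempty : (Afin k).filter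
        (fun t : ℕ×ℕ×ℕ => ¬t.2.2 = 0 ∧ ¬(t.1 = 0 ∨ t.2.1 = 0) ∧ ¬(t.1 = t.2.2 ∨ t.2.1 = t.2.2) ∧ t.1 = t.2.1)
        = ∅ := by
      rw [Finset.filter_eq_empty_iff]
      rintro ⟨a, b, c⟩ ht
      rw [mem_Afin] at ht
      rintro ⟨-, -, -, hab⟩
      have hab' : a = b := hab
      have heq : a^2 + b^2 + 2*c^2 = k := ht
      subst hab'
      have hd : 2 ∣ k := ⟨a^2 + c^2, by linarith⟩
      omega
    rw [hempty, L2half, if_neg hpar]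
    simp

lemma partA1 (k : ℕ) :
    ∑ t ∈ (Afin k).filter
        (fun t => ¬t.2.2 = 0 ∧ ¬(t.1 = 0 ∨ t.2.1 = 0) ∧ ¬(t.1 = t.2.2 ∨ t.2.1 = t.2.2) ∧ ¬t.1 = t.2.1),
      ((if t.1 = 0 then 1 else 2) * ((if t.2.1 = 0 then 1 else 2) * (if t.2.2 = 0 then 1 else 2)))
      = 16 * L112 k := by
  have hconst : ∀ t ∈ (Afin k).filter
      (fun t : ℕ×ℕ×ℕ => ¬t.2.2 = 0 ∧ ¬(t.1 = 0 ∨ t.2.1 = 0) ∧ ¬(t.1 = t.2.2 ∨ t.2.1 = t.2.2) ∧ ¬t.1 = t.2.1),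
      ((if t.1 = 0 then 1 else 2) * ((if t.2.1 = 0 then 1 else 2) * (if t.2.2 = 0 then 1 else 2))) = 8 := by
    rintro ⟨a, b, c⟩ ht
    simp only [mem_filter, mem_Afin] at ht
    obtain ⟨-, hc, hab, -⟩ := ht
    push_neg at hab
    simp [hc, hab.1, hab.2]
  rw [Finset.sum_congr rfl hconst, Finset.sum_const, smul_eq_mul]
  have hset : (Afin k).filter
      (fun t : ℕ×ℕ×ℕ => ¬t.2.2 = 0 ∧ ¬(t.1 = 0 ∨ t.2.1 = 0) ∧ ¬(t.1 = t.2.2 ∨ t.2.1 = t.2.2) ∧ ¬t.1 = t.2.1)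
      = (L112fin k).image (fun t => (t.1, t.2.1, t.2.2)) ∪ (L112fin k).image (fun t => (t.2.1, t.1, t.2.2)) := by
    ext ⟨a, b, c⟩
    simp only [mem_filter, mem_Afin, mem_union, mem_image, mem_L112fin, Prod.mk.injEq]
    constructor
    · rintro ⟨heq, hc, hab0, hnec, hab⟩
      push_neg at hab0 hnec
      have ha : 0 < a := Nat.pos_of_ne_zero hab0.1
      have hb : 0 < b := Nat.pos_of_ne_zero hab0.2
      have hc' : 0 < c := Nat.pos_of_ne_zero hc
      rcases lt_or_gt_of_ne hab with hlt | hgt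
      · exact Or.inl ⟨(a, b, c), ⟨ha, hc', hlt, hnec.1, hnec.2, heq⟩, rfl, rfl, rfl⟩
      · exact Or.inr ⟨(b, a, c), ⟨hb, hc', hgt, hnec.2, hnec.1, by linarith⟩, rfl, rfl, rfl⟩
    · rintro (⟨⟨x, y, z⟩, ⟨h1, h2, h3, h4, h5, h6⟩, rfl, rfl, rfl⟩ |
        ⟨⟨x, y, z⟩, ⟨h1, h2, h3, h4, h5, h6⟩, rfl, rfl, rfl⟩)
      · exact ⟨h6, by omega, by omega, by omega, by omega⟩
      · exact ⟨by linarith, by omega, by omega, by omega, by omega⟩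
  have hinj1 : Set.InjOn (fun t : ℕ×ℕ×ℕ => ((t.1, t.2.1, t.2.2) : ℕ×ℕ×ℕ)) (L112fin k) := by
    intro p _ q _ hpq
    simp only [Prod.mk.injEq] at hpq
    exact Prod.ext hpq.1 (Prod.ext hpq.2.1 hpq.2.2)
  have hinj2 : Set.InjOn (fun t : ℕ×ℕ×ℕ => ((t.2.1, t.1, t.2.2) : ℕ×ℕ×ℕ)) (L112fin k) := by
    intro p _ q _ hpq
    simp only [Prod.mk.injEq] at hpq
    exact Prod.ext hpq.2.1 (Prod.ext hpq.1 hpq.2.2)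
  have hdisj : Disjoint ((L112fin k).image (fun t => (t.1, t.2.1, t.2.2)))
      ((L112fin k).image (fun t => (t.2.1, t.1, t.2.2))) := by
    rw [Finset.disjoint_left]
    rintro ⟨a, b, c⟩ h1 h2
    simp only [mem_image, mem_L112fin, Prod.mk.injEq] at h1 h2
    obtain ⟨⟨x, y, z⟩, ⟨-, -, hxy, -⟩, rfl, rfl, rfl⟩ := h1
    obtain ⟨⟨x', y', z'⟩, ⟨-, -, hxy', -⟩, h1', h2', h3'⟩ := h2
    omega
  rw [hset, card_union_of_disjoint hdisj, Finset.card_image_of_injOn hinj1,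
    Finset.card_image_of_injOn hinj2, L112_eq]
  ring

theorem stmt8 (k : ℕ) (hk : 0 < k)
    (h : ∀ m : ℕ, 0 < m → k ≠ m ^ 2 ∧ k ≠ 2 * m ^ 2 ∧ k ≠ 3 * m ^ 2 ∧ k ≠ 4 * m ^ 2) :
    (16 * L112 k : ℤ) =
      N112 k - 8 * L2 k - 8 * L12 k - 16 * L13 k - 16 * L2half k := by
  have hN : N112 k = 16 * L112 k + 8 * L2 k + 8 * L12 k + 16 * L13 k + 16 * L2half k := by
    set w : ℕ×ℕ×ℕ → ℕ := fun t =>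
      ((if t.1 = 0 then 1 else 2) * ((if t.2.1 = 0 then 1 else 2) * (if t.2.2 = 0 then 1 else 2)))
      with hw
    have hsplit : ∀ (s : Finset (ℕ×ℕ×ℕ)) (p : ℕ×ℕ×ℕ → Prop) [DecidablePred p],
        ∑ t ∈ s, w t = ∑ t ∈ s.filter p, w t + ∑ t ∈ s.filter (fun t => ¬ p t), w t :=
      fun s p _ => (Finset.sum_filter_add_sum_filter_not s p w).symm
    rw [N112_eq k hk, card_Sfin k hk]
    rw [hsplit (Afin k) (fun t => t.2.2 = 0)]
    rw [hsplit ((Afin k).filter (fun t => ¬ t.2.2 = 0)) (fun t => t.1 = 0 ∨ t.2.1 = 0)]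
    rw [hsplit (((Afin k).filter (fun t => ¬ t.2.2 = 0)).filter (fun t => ¬ (t.1 = 0 ∨ t.2.1 = 0)))
      (fun t => t.1 = t.2.2 ∨ t.2.1 = t.2.2)]
    rw [hsplit ((((Afin k).filter (fun t => ¬ t.2.2 = 0)).filter (fun t => ¬ (t.1 = 0 ∨ t.2.1 = 0))).filter
        (fun t => ¬ (t.1 = t.2.2 ∨ t.2.1 = t.2.2)))
      (fun t => t.1 = t.2.1)]
    have c3 : ((Afin k).filter (fun t => ¬ t.2.2 = 0)).filter (fun t => t.1 = 0 ∨ t.2.1 = 0)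
        = (Afin k).filter (fun t => ¬t.2.2 = 0 ∧ (t.1 = 0 ∨ t.2.1 = 0)) := by
      ext t; simp only [Finset.mem_filter]; tauto
    have c4 : (((Afin k).filter (fun t => ¬ t.2.2 = 0)).filter (fun t => ¬ (t.1 = 0 ∨ t.2.1 = 0))).filter
        (fun t => t.1 = t.2.2 ∨ t.2.1 = t.2.2)
        = (Afin k).filter (fun t => ¬t.2.2 = 0 ∧ ¬(t.1 = 0 ∨ t.2.1 = 0) ∧ (t.1 = t.2.2 ∨ t.2.1 = t.2.2)) := by
      ext t; simp only [Finset.mem_filter]; tauto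
    have c5 : ((((Afin k).filter (fun t => ¬ t.2.2 = 0)).filter (fun t => ¬ (t.1 = 0 ∨ t.2.1 = 0))).filter
        (fun t => ¬ (t.1 = t.2.2 ∨ t.2.1 = t.2.2))).filter (fun t => t.1 = t.2.1)
        = (Afin k).filter (fun t => ¬t.2.2 = 0 ∧ ¬(t.1 = 0 ∨ t.2.1 = 0) ∧ ¬(t.1 = t.2.2 ∨ t.2.1 = t.2.2) ∧ t.1 = t.2.1) := by
      ext t; simp only [Finset.mem_filter]; tauto
    have c1 : ((((Afin k).filter (fun t => ¬ t.2.2 = 0)).filter (fun t => ¬ (t.1 = 0 ∨ t.2.1 = 0))).filter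
        (fun t => ¬ (t.1 = t.2.2 ∨ t.2.1 = t.2.2))).filter (fun t => ¬ t.1 = t.2.1)
        = (Afin k).filter (fun t => ¬t.2.2 = 0 ∧ ¬(t.1 = 0 ∨ t.2.1 = 0) ∧ ¬(t.1 = t.2.2 ∨ t.2.1 = t.2.2) ∧ ¬t.1 = t.2.1) := by
      ext t; simp only [Finset.mem_filter]; tauto
    rw [c3, c4, c5, c1, hw]
    rw [partA2 k hk h, partA3 k hk h, partA4 k hk h, partA5 k hk h, partA1 k]
    ring
  rw [hN]
  push_cast
  ring
end

section
/- Let k be a positive integer such that k ≠ m², k ≠ 2m², k ≠ 3m², and k ≠ 4m² for every positive integer m. Then 384·L₄(k) = N₄(k) − 192·L₁,₁,₂(k) − 192·L₃(k) − 48·L₂(k) − 96·L₁,₂(k) − 64·L₁,₃(k) − 96·L₂(k/2), where L₂(k/2) is interpreted as 0 when k is odd. -/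
noncomputable def N4 (k : ℕ) : ℕ := {q : ℤ × ℤ × ℤ × ℤ | q.1 ^ 2 + q.2.1 ^ 2 + q.2.2.1 ^ 2 + q.2.2.2 ^ 2 = (k : ℤ)}.ncard

noncomputable def L4 (k : ℕ) : ℕ := {q : ℕ × ℕ × ℕ × ℕ | 0 < q.1 ∧ q.1 < q.2.1 ∧ q.2.1 < q.2.2.1 ∧ q.2.2.1 < q.2.2.2 ∧ q.1 ^ 2 + q.2.1 ^ 2 + q.2.2.1 ^ 2 + q.2.2.2 ^ 2 = k}.ncard

noncomputable def L3 (k : ℕ) : ℕ := {t : ℕ × ℕ × ℕ | 0 < t.1 ∧ t.1 < t.2.1 ∧ t.2.1 < t.2.2 ∧ t.1 ^ 2 + t.2.1 ^ 2 + t.2.2 ^ 2 = k}.ncard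

set_option maxRecDepth 20000
-- assume core + part2 present (concatenate later); for dev, copy:


abbrev Pt := (Fin 4 × Bool) × (Fin 4 × Bool) × (Fin 4 × Bool) × (Fin 4 × Bool)

def sgn (s : Bool) (n : ℕ) : ℤ := if s then -(n : ℤ) else (n : ℤ)

def dec4 (w : Fin 4 → ℕ) (p : Pt) : ℤ × ℤ × ℤ × ℤ :=
  (sgn p.1.2 (w p.1.1), sgn p.2.1.2 (w p.2.1.1), sgn p.2.2.1.2 (w p.2.2.1.1),
   sgn p.2.2.2.2 (w p.2.2.2.1))

def jm (p : Pt) : Multiset (Fin 4) := ↑[p.1.1, p.2.1.1, p.2.2.1.1, p.2.2.2.1]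

def zc (p : Pt) : Prop := (p.1.1 = 0 → p.1.2 = false) ∧ (p.2.1.1 = 0 → p.2.1.2 = false) ∧
  (p.2.2.1.1 = 0 → p.2.2.1.2 = false) ∧ (p.2.2.2.1 = 0 → p.2.2.2.2 = false)

instance : DecidablePred zc := fun p => by unfold zc; infer_instance

def zcW (w : Fin 4 → ℕ) (p : Pt) : Prop :=
  (w p.1.1 = 0 → p.1.2 = false) ∧ (w p.2.1.1 = 0 → p.2.1.2 = false) ∧
  (w p.2.2.1.1 = 0 → p.2.2.1.2 = false) ∧ (w p.2.2.2.1 = 0 → p.2.2.2.2 = false)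

def μq (q : ℤ × ℤ × ℤ × ℤ) : Multiset ℕ :=
  ↑[q.1.natAbs, q.2.1.natAbs, q.2.2.1.natAbs, q.2.2.2.natAbs]

lemma sgn_natAbs (s : Bool) (n : ℕ) : (sgn s n).natAbs = n := by
  cases s <;> simp [sgn]

lemma sgn_self (x : ℤ) : sgn (decide (x < 0)) x.natAbs = x := by
  unfold sgn
  rcases lt_or_ge x 0 with h | h
  · rw [decide_eq_true h]; simp only [if_pos]; omega
  · rw [decide_eq_false (not_lt.2 h)]; simp only [Bool.false_eq_true, if_neg, not_false_iff]; omega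

lemma mu_dec (w : Fin 4 → ℕ) (p : Pt) : μq (dec4 w p) = (jm p).map w := by
  simp [μq, dec4, jm, sgn_natAbs]

lemma mu_dec_eq (w : Fin 4 → ℕ) (p : Pt) (l : List (Fin 4)) (h : jm p = (↑l : Multiset (Fin 4))) :
    μq (dec4 w p) = ↑(l.map w) := by
  rw [mu_dec, h]; simp

-- step of extraction
lemma step (w : Fin 4 → ℕ) (m : Multiset (Fin 4)) (n : ℕ) (rest : Multiset ℕ)
    (h : n ::ₘ rest = m.map w) : ∃ j ∈ m, w j = n ∧ rest = (m.erase j).map w := by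
  have hn : n ∈ m.map w := by rw [← h]; exact Multiset.mem_cons_self _ _
  obtain ⟨j, hj, hw⟩ := Multiset.mem_map.1 hn
  refine ⟨j, hj, hw, ?_⟩
  have h2 : m.map w = w j ::ₘ (m.erase j).map w := by
    conv_lhs => rw [← Multiset.cons_erase hj]
    simp
  rw [h2, hw] at h
  exact ((Multiset.cons_inj_right n).1 h)

lemma exists_profile (w : Fin 4 → ℕ) (mc : Multiset (Fin 4)) (q : ℤ × ℤ × ℤ × ℤ)
    (hμ : μq q = mc.map w) :
    ∃ p : Pt, jm p = mc ∧ dec4 w p = q ∧ zcW w p := by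
  obtain ⟨q1, q2, q3, q4⟩ := q
  have h1 : q1.natAbs ::ₘ (↑[q2.natAbs, q3.natAbs, q4.natAbs] : Multiset ℕ) = mc.map w := by
    rw [← hμ]; simp [μq]
  obtain ⟨j1, hj1, hw1, h2⟩ := step w mc _ _ h1
  have h2' : q2.natAbs ::ₘ (↑[q3.natAbs, q4.natAbs] : Multiset ℕ) = (mc.erase j1).map w := by
    rw [← h2]; rfl
  obtain ⟨j2, hj2, hw2, h3⟩ := step w _ _ _ h2'
  have h3' : q3.natAbs ::ₘ (↑[q4.natAbs] : Multiset ℕ) = ((mc.erase j1).erase j2).map w := by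
    rw [← h3]; rfl
  obtain ⟨j3, hj3, hw3, h4⟩ := step w _ _ _ h3'
  have h4' : q4.natAbs ::ₘ (0 : Multiset ℕ) = (((mc.erase j1).erase j2).erase j3).map w := by
    rw [← h4]; rfl
  obtain ⟨j4, hj4, hw4, _⟩ := step w _ _ _ h4'
  refine ⟨((j1, decide (q1 < 0)), (j2, decide (q2 < 0)), (j3, decide (q3 < 0)),
    (j4, decide (q4 < 0))), ?_, ?_, ?_⟩
  · show (↑[j1, j2, j3, j4] : Multiset (Fin 4)) = mc
    have e4 : (((mc.erase j1).erase j2).erase j3) = {j4} := by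
      have hcard : (((mc.erase j1).erase j2).erase j3).card = 1 := by
        have c0 : mc.card = 4 := by
          have := congrArg Multiset.card hμ
          simp [μq] at this
          omega
        rw [Multiset.card_erase_of_mem hj3, Multiset.card_erase_of_mem hj2,
          Multiset.card_erase_of_mem hj1, c0]
        rfl
      obtain ⟨a, ha⟩ := Multiset.card_eq_one.1 hcard
      rw [ha] at hj4 ⊢
      simp at hj4; rw [hj4]
    have e3 : ((mc.erase j1).erase j2) = j3 ::ₘ {j4} := by
      rw [← e4]; exact (Multiset.cons_erase hj3).symm
    have e2 : (mc.erase j1) = j2 ::ₘ j3 ::ₘ {j4} := by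
      rw [← e3]; exact (Multiset.cons_erase hj2).symm
    have e1 : mc = j1 ::ₘ j2 ::ₘ j3 ::ₘ {j4} := by
      rw [← e2]; exact (Multiset.cons_erase hj1).symm
    rw [e1]; rfl
  · simp only [dec4]
    rw [hw1, hw2, hw3, hw4]
    simp only [sgn_self]
  · refine ⟨?_, ?_, ?_, ?_⟩ <;> intro hz <;> simp only []
    · have : q1.natAbs = 0 := by rw [hw1] at hz; exact hz
      have : q1 = 0 := by omega
      simp [this]
    · have : q2.natAbs = 0 := by rw [hw2] at hz; exact hz
      have : q2 = 0 := by omega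
      simp [this]
    · have : q3.natAbs = 0 := by rw [hw3] at hz; exact hz
      have : q3 = 0 := by omega
      simp [this]
    · have : q4.natAbs = 0 := by rw [hw4] at hz; exact hz
      have : q4 = 0 := by omega
      simp [this]

lemma comp_inj (w : Fin 4 → ℕ) {j j' : Fin 4} {s s' : Bool}
    (hjj : w j = w j' → j = j') (hz : w j = 0 → s = false) (hz' : w j' = 0 → s' = false)
    (h : sgn s (w j) = sgn s' (w j')) : j = j' ∧ s = s' := by
  have hv : w j = w j' := by
    have := congrArg Int.natAbs h
    simpa [sgn_natAbs] using this
  have hj := hjj hv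
  subst hj
  refine ⟨rfl, ?_⟩
  rw [← hv] at h
  rcases Nat.eq_zero_or_pos (w j) with h0 | h0
  · rw [hz h0, hz' h0]
  · cases s <;> cases s' <;> simp [sgn] at h ⊢ <;> omega

lemma dec_inj (w : Fin 4 → ℕ) (mc : Multiset (Fin 4))
    (hw : ∀ j ∈ mc, ∀ j' ∈ mc, w j = w j' → j = j')
    {p p' : Pt} (hp : jm p = mc) (hp' : jm p' = mc) (hz : zcW w p) (hz' : zcW w p')
    (h : dec4 w p = dec4 w p') : p = p' := by
  obtain ⟨⟨j1, s1⟩, ⟨j2, s2⟩, ⟨j3, s3⟩, ⟨j4, s4⟩⟩ := p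
  obtain ⟨⟨i1, t1⟩, ⟨i2, t2⟩, ⟨i3, t3⟩, ⟨i4, t4⟩⟩ := p'
  simp only [dec4, Prod.mk.injEq] at h
  simp only [jm, Multiset.coe_eq_coe] at hp hp'
  obtain ⟨hz1, hz2, hz3, hz4⟩ := hz
  obtain ⟨hz1', hz2', hz3', hz4'⟩ := hz'
  dsimp only at hz1 hz2 hz3 hz4 hz1' hz2' hz3' hz4'
  have mem : ∀ a ∈ [j1, j2, j3, j4], a ∈ mc := by
    intro a ha; rw [← hp]; exact Multiset.mem_coe.2 ha
  have mem' : ∀ a ∈ [i1, i2, i3, i4], a ∈ mc := by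
    intro a ha; rw [← hp']; exact Multiset.mem_coe.2 ha
  have c1 := comp_inj w (hw j1 (mem _ (by simp)) i1 (mem' _ (by simp))) hz1 hz1' h.1
  have c2 := comp_inj w (hw j2 (mem _ (by simp)) i2 (mem' _ (by simp))) hz2 hz2' h.2.1
  have c3 := comp_inj w (hw j3 (mem _ (by simp)) i3 (mem' _ (by simp))) hz3 hz3' h.2.2.1
  have c4 := comp_inj w (hw j4 (mem _ (by simp)) i4 (mem' _ (by simp))) hz4 hz4' h.2.2.2
  simp [c1.1, c1.2, c2.1, c2.2, c3.1, c3.2, c4.1, c4.2]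

def Sqs (m : Multiset ℕ) : ℕ := (m.map (· ^ 2)).sum

lemma Sqs_coe (a b c d : ℕ) : Sqs ↑[a, b, c, d] = a ^ 2 + b ^ 2 + c ^ 2 + d ^ 2 := by
  simp [Sqs]; ring

lemma cnt4 (a b c d t : ℕ) : (↑[a, b, c, d] : Multiset ℕ).count t =
    (if a = t then 1 else 0) + (if b = t then 1 else 0) + (if c = t then 1 else 0) +
    (if d = t then 1 else 0) := by
  simp [List.count_cons, Multiset.coe_count]
  split_ifs <;> omega

lemma cnt4' (a b c d t : ℕ) (h : (↑[a,b,c,d] : Multiset ℕ) = ↑[5,6,7,8]) : True := trivial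

example (a c d : ℕ) : (↑[a, a, c, d] : Multiset ℕ) = ↑[c, d, a, a] := by
  rw [Multiset.coe_eq_coe, List.perm_iff_count]
  intro t
  simp only [List.count_cons, List.count_nil]
  split_ifs <;> omega

lemma sorted_rec (a b c d a' b' c' d' : ℕ)
    (h : (↑[a, b, c, d] : Multiset ℕ) = ↑[a', b', c', d'])
    (s1 : a ≤ b) (s2 : b ≤ c) (s3 : c ≤ d)
    (s1' : a' ≤ b') (s2' : b' ≤ c') (s3' : c' ≤ d') :
    a = a' ∧ b = b' ∧ c = c' ∧ d = d' := by
  have hperm := Multiset.coe_eq_coe.1 h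
  have := List.Perm.eq_of_pairwise' (r := (· ≤ · : ℕ → ℕ → Prop)) (by
    simp [List.pairwise_cons]; omega) (by simp [List.pairwise_cons]; omega) hperm
  simp_all

lemma sorted_rec2 (x y x' y' : ℕ) (h : (↑[x, y] : Multiset ℕ) = ↑[x', y'])
    (s : x ≤ y) (s' : x' ≤ y') : x = x' ∧ y = y' := by
  have hperm := Multiset.coe_eq_coe.1 h
  have := List.Perm.eq_of_pairwise' (r := (· ≤ · : ℕ → ℕ → Prop)) (by
    simp [List.pairwise_cons]; omega) (by simp [List.pairwise_cons]; omega) hperm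
  simp_all

lemma R2 (x y z x' y' z' : ℕ) (hxy : x < y) (hzx : z ≠ x) (hzy : z ≠ y)
    (hxy' : x' < y') (hzx' : z' ≠ x') (hzy' : z' ≠ y')
    (h : (↑[x, y, z, z] : Multiset ℕ) = ↑[x', y', z', z']) : x = x' ∧ y = y' ∧ z = z' := by
  have hz : z = z' := by
    have e := congrArg (Multiset.count z) h
    rw [cnt4, cnt4] at e
    split_ifs at e <;> omega
  subst hz
  have h2 : (↑[x, y] : Multiset ℕ) = ↑[x', y'] := by
    rw [Multiset.coe_eq_coe, List.perm_iff_count]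
    intro t
    have e := congrArg (Multiset.count t) h
    rw [cnt4, cnt4] at e
    simp only [List.count_cons, List.count_nil, beq_iff_eq]
    split_ifs at e ⊢ <;> omega
  have := sorted_rec2 x y x' y' h2 hxy.le hxy'.le
  exact ⟨this.1, this.2, rfl⟩

lemma R5 (x y x' y' : ℕ) (hxy : x ≠ y) (hxy' : x' ≠ y')
    (h : (↑[x, y, y, y] : Multiset ℕ) = ↑[x', y', y', y']) : x = x' ∧ y = y' := by
  have hy : y = y' := by
    have e := congrArg (Multiset.count y) h
    rw [cnt4, cnt4] at e
    split_ifs at e <;> omega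
  subst hy
  have hx : x = x' := by
    have e := congrArg (Multiset.count x) h
    rw [cnt4, cnt4] at e
    split_ifs at e <;> omega
  exact ⟨hx, rfl⟩

lemma R6 (x y x' y' : ℕ) (hx : 0 < x) (hy : 0 < y) (hxy : x ≠ y)
    (hx' : 0 < x') (hy' : 0 < y') (hxy' : x' ≠ y')
    (h : (↑[0, x, y, y] : Multiset ℕ) = ↑[0, x', y', y']) : x = x' ∧ y = y' := by
  have hyy : y = y' := by
    have e := congrArg (Multiset.count y) h
    rw [cnt4, cnt4] at e
    split_ifs at e <;> omega
  subst hyy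
  have hxx : x = x' := by
    have e := congrArg (Multiset.count x) h
    rw [cnt4, cnt4] at e
    split_ifs at e <;> omega
  exact ⟨hxx, rfl⟩

lemma sum_sq_eq (q : ℤ × ℤ × ℤ × ℤ) :
    q.1 ^ 2 + q.2.1 ^ 2 + q.2.2.1 ^ 2 + q.2.2.2 ^ 2 = (Sqs (μq q) : ℤ) := by
  obtain ⟨a, b, c, d⟩ := q
  simp [Sqs, μq]
  push_cast
  try rw [Int.natAbs_sq, Int.natAbs_sq, Int.natAbs_sq, Int.natAbs_sq]
  ring

def Phi {α : Type} (w : α → Fin 4 → ℕ) : α × Pt → ℤ × ℤ × ℤ × ℤ := fun x => dec4 (w x.1) x.2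

lemma ncard_class {α : Type} (A : Set α) (w : α → Fin 4 → ℕ) (mc : Multiset (Fin 4)) (P : Set Pt)
    (hP : ∀ p ∈ P, jm p = mc)
    (hz : ∀ a ∈ A, ∀ p ∈ P, zcW (w a) p)
    (hinj : ∀ a ∈ A, ∀ j ∈ mc, ∀ j' ∈ mc, w a j = w a j' → j = j')
    (hrec : ∀ a ∈ A, ∀ a' ∈ A, mc.map (w a) = mc.map (w a') → a = a') :
    (Phi w '' (A ×ˢ P)).ncard = A.ncard * P.ncard := by
  have hIJ : Set.InjOn (Phi w) (A ×ˢ P) := by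
    rintro ⟨a, p⟩ ⟨ha, hp⟩ ⟨a', p'⟩ ⟨ha', hp'⟩ he
    simp only [Phi] at he
    have h1 : μq (dec4 (w a) p) = mc.map (w a) := by rw [mu_dec, hP p hp]
    have h2 : μq (dec4 (w a') p') = mc.map (w a') := by rw [mu_dec, hP p' hp']
    have hmu : mc.map (w a) = mc.map (w a') := by rw [← h1, ← h2, he]
    have haa : a = a' := hrec a ha a' ha' hmu
    subst haa
    have hpp : p = p' := dec_inj (w a) mc (hinj a ha) (hP p hp) (hP p' hp')
      (hz a ha p hp) (hz a ha p' hp') he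
    rw [hpp]
  rw [Set.ncard_image_of_injOn hIJ]
  rw [← Nat.card_coe_set_eq, ← Nat.card_coe_set_eq, ← Nat.card_coe_set_eq]
  rw [Nat.card_congr (Equiv.Set.prod A P), Nat.card_prod]

lemma mem_class {α : Type} (A : Set α) (w : α → Fin 4 → ℕ) (mc : Multiset (Fin 4)) (P : Set Pt)
    (hP : ∀ p, jm p = mc → zc p → p ∈ P)
    (hz0 : ∀ a, w a 0 = 0)  -- only for sign classes; see variant below
    (q : ℤ × ℤ × ℤ × ℤ) (a : α) (ha : a ∈ A) (hμ : μq q = mc.map (w a)) :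
    q ∈ Phi w '' (A ×ˢ P) := by
  obtain ⟨p, hjm, hdec, hzw⟩ := exists_profile (w a) mc q hμ
  refine ⟨(a, p), ⟨ha, hP p hjm ?_⟩, hdec⟩
  obtain ⟨z1, z2, z3, z4⟩ := hzw
  refine ⟨?_, ?_, ?_, ?_⟩ <;> intro hj
  · exact z1 (by rw [hj, hz0])
  · exact z2 (by rw [hj, hz0])
  · exact z3 (by rw [hj, hz0])
  · exact z4 (by rw [hj, hz0])

lemma mem_class' {α : Type} (A : Set α) (w : α → Fin 4 → ℕ) (mc : Multiset (Fin 4)) (P : Set Pt)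
    (hP : ∀ p, jm p = mc → p ∈ P)
    (q : ℤ × ℤ × ℤ × ℤ) (a : α) (ha : a ∈ A) (hμ : μq q = mc.map (w a)) :
    q ∈ Phi w '' (A ×ˢ P) := by
  obtain ⟨p, hjm, hdec, _⟩ := exists_profile (w a) mc q hμ
  exact ⟨(a, p), ⟨ha, hP p hjm⟩, hdec⟩

lemma class_sub_S {α : Type} (k : ℕ) (A : Set α) (w : α → Fin 4 → ℕ) (mc : Multiset (Fin 4))
    (P : Set Pt) (hP : ∀ p ∈ P, jm p = mc)
    (hsum : ∀ a ∈ A, Sqs (mc.map (w a)) = k) :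
    ∀ q ∈ Phi w '' (A ×ˢ P),
      q.1 ^ 2 + q.2.1 ^ 2 + q.2.2.1 ^ 2 + q.2.2.2 ^ 2 = (k : ℤ) := by
  rintro q ⟨⟨a, p⟩, ⟨ha, hp⟩, rfl⟩
  rw [sum_sq_eq]
  have : μq (Phi w (a, p)) = mc.map (w a) := by
    rw [Phi, mu_dec, hP p hp]
  rw [this, hsum a ha]

def w4f (x y z v : ℕ) : Fin 4 → ℕ := fun j => if j = 0 then x else if j = 1 then y else if j = 2 then z else v

@[simp] lemma w4f_0 (x y z v : ℕ) : w4f x y z v 0 = x := rfl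
@[simp] lemma w4f_1 (x y z v : ℕ) : w4f x y z v 1 = y := rfl
@[simp] lemma w4f_2 (x y z v : ℕ) : w4f x y z v 2 = z := rfl
@[simp] lemma w4f_3 (x y z v : ℕ) : w4f x y z v 3 = v := rfl

lemma zcW_of_pos (w : Fin 4 → ℕ) (mc : Multiset (Fin 4)) (p : Pt) (hp : jm p = mc)
    (hpos : ∀ j ∈ mc, w j ≠ 0) : zcW w p := by
  have m1 : p.1.1 ∈ mc := by rw [← hp]; simp [jm]
  have m2 : p.2.1.1 ∈ mc := by rw [← hp]; simp [jm]
  have m3 : p.2.2.1.1 ∈ mc := by rw [← hp]; simp [jm]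
  have m4 : p.2.2.2.1 ∈ mc := by rw [← hp]; simp [jm]
  exact ⟨fun hz => absurd hz (hpos _ m1), fun hz => absurd hz (hpos _ m2),
    fun hz => absurd hz (hpos _ m3), fun hz => absurd hz (hpos _ m4)⟩

lemma zcW_of_zc (w : Fin 4 → ℕ) (mc : Multiset (Fin 4)) (p : Pt) (hp : jm p = mc)
    (hzc : zc p) (h0 : ∀ j ∈ mc, w j = 0 → j = 0) : zcW w p := by
  have m1 : p.1.1 ∈ mc := by rw [← hp]; simp [jm]
  have m2 : p.2.1.1 ∈ mc := by rw [← hp]; simp [jm]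
  have m3 : p.2.2.1.1 ∈ mc := by rw [← hp]; simp [jm]
  have m4 : p.2.2.2.1 ∈ mc := by rw [← hp]; simp [jm]
  exact ⟨fun hz => hzc.1 (h0 _ m1 hz), fun hz => hzc.2.1 (h0 _ m2 hz),
    fun hz => hzc.2.2.1 (h0 _ m3 hz), fun hz => hzc.2.2.2 (h0 _ m4 hz)⟩

-- classifier
open Classical in
noncomputable def cls (m : Multiset ℕ) : ℕ :=
  if m.count 0 = 2 then 7
  else if m.count 0 = 1 then (if m.toFinset.card = 4 then 5 else 6)
  else if m.toFinset.card = 4 then 1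
  else if m.toFinset.card = 3 then 2
  else if ∃ t, m.count t = 3 then 4
  else 3

lemma card3' (x y z : ℕ) (h1 : x ≠ y) (h2 : x ≠ z) (h3 : y ≠ z) :
    ({x, y, z} : Finset ℕ).card = 3 := by
  rw [Finset.card_insert_of_notMem (by simp [h1, h2]),
    Finset.card_insert_of_notMem (by simp [h3]), Finset.card_singleton]

lemma card4' (x y z v : ℕ) (h1 : x ≠ y) (h2 : x ≠ z) (h3 : x ≠ v) (h4 : y ≠ z) (h5 : y ≠ v)
    (h6 : z ≠ v) : ({x, y, z, v} : Finset ℕ).card = 4 := by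
  rw [Finset.card_insert_of_notMem (by simp [h1, h2, h3]),
    Finset.card_insert_of_notMem (by simp [h4, h5]),
    Finset.card_insert_of_notMem (by simp [h6]), Finset.card_singleton]

lemma tf4 (a b c d : ℕ) : (↑[a, b, c, d] : Multiset ℕ).toFinset = {a, b, c, d} := by
  ext t; simp

-- ============ CLASS 1 ============
def A1 (k : ℕ) : Set (ℕ × ℕ × ℕ × ℕ) := {q | 0 < q.1 ∧ q.1 < q.2.1 ∧ q.2.1 < q.2.2.1 ∧ q.2.2.1 < q.2.2.2 ∧ q.1 ^ 2 + q.2.1 ^ 2 + q.2.2.1 ^ 2 + q.2.2.2 ^ 2 = k}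
def w1 (a : ℕ × ℕ × ℕ × ℕ) : Fin 4 → ℕ := w4f a.1 a.2.1 a.2.2.1 a.2.2.2
def mc1 : Multiset (Fin 4) := ↑([0, 1, 2, 3] : List (Fin 4))
def P1 : Set Pt := {p | jm p = mc1}
def C1 (k : ℕ) : Set (ℤ × ℤ × ℤ × ℤ) := Phi w1 '' (A1 k ×ˢ P1)

lemma map1 (a : ℕ × ℕ × ℕ × ℕ) : mc1.map (w1 a) = ↑[a.1, a.2.1, a.2.2.1, a.2.2.2] := rfl

lemma ncardP1 : P1.ncard = 384 := by
  have : P1 = ↑((Finset.univ : Finset Pt).filter (fun p => jm p = mc1)) := by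
    ext p; simp [P1]
  rw [this, Set.ncard_coe_finset]
  decide

lemma ncardC1 (k : ℕ) : (C1 k).ncard = (A1 k).ncard * 384 := by
  rw [C1, ncard_class (A1 k) w1 mc1 P1 (fun p hp => hp) ?_ ?_ ?_, ncardP1]
  · intro a ha p hp
    exact zcW_of_pos _ mc1 p hp (by
      obtain ⟨x, y, z, v⟩ := a
      obtain ⟨h1, h2, h3, h4, h5⟩ := ha
      dsimp only at h1 h2 h3 h4 h5
      intro j hj
      fin_cases j <;> simp_all [mc1, w1] <;> omega)
  · intro a ha j hj jj hjj
    obtain ⟨x, y, z, v⟩ := a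
    obtain ⟨h1, h2, h3, h4, h5⟩ := ha
    dsimp only at h1 h2 h3 h4 h5
    fin_cases j <;> fin_cases jj <;> simp_all [mc1, w1] <;> omega
  · intro a ha a' ha' hmm
    obtain ⟨x, y, z, v⟩ := a
    obtain ⟨x', y', z', v'⟩ := a'
    obtain ⟨h1, h2, h3, h4, h5⟩ := ha
    obtain ⟨h1', h2', h3', h4', h5'⟩ := ha'
    dsimp only at h1 h2 h3 h4 h5 h1' h2' h3' h4' h5'
    simp only [map1] at hmm
    try dsimp only at hmm
    have := sorted_rec x y z v x' y' z' v' hmm h2.le h3.le h4.le h2'.le h3'.le h4'.le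
    simp_all

lemma reorder4 (a b c d : ℕ) : (↑[a, b, c, d] : Multiset ℕ) = ↑[a, c, b, d] := by
  rw [Multiset.coe_eq_coe, List.perm_iff_count]
  intro t
  simp only [List.count_cons, List.count_nil, beq_iff_eq]
  split_ifs <;> omega

lemma reorder3 (x y : ℕ) : (↑[0, x, y, 0] : Multiset ℕ) = ↑[0, 0, x, y] := by
  rw [Multiset.coe_eq_coe, List.perm_iff_count]
  intro t
  simp only [List.count_cons, List.count_nil, beq_iff_eq]
  split_ifs <;> omega

lemma R3 (x y x' y' : ℕ) (hxy : x < y) (hxy' : x' < y')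
    (h : (↑[x, y, x, y] : Multiset ℕ) = ↑[x', y', x', y']) : x = x' ∧ y = y' := by
  rw [reorder4 x y x y, reorder4 x' y' x' y'] at h
  have := sorted_rec x x y y x' x' y' y' h le_rfl hxy.le le_rfl le_rfl hxy'.le le_rfl
  exact ⟨this.1, this.2.2.1⟩

lemma R7 (x y x' y' : ℕ) (hx : 0 < x) (hxy : x < y) (hx' : 0 < x') (hxy' : x' < y')
    (h : (↑[0, x, y, 0] : Multiset ℕ) = ↑[0, x', y', 0]) : x = x' ∧ y = y' := by
  rw [reorder3 x y, reorder3 x' y'] at h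
  have := sorted_rec 0 0 x y 0 0 x' y' h le_rfl (by omega) hxy.le le_rfl (by omega) hxy'.le
  exact ⟨this.2.2.1, this.2.2.2⟩

-- ============ CLASS 2 ============
def A2 (k : ℕ) : Set (ℕ × ℕ × ℕ) := {t | 0 < t.1 ∧ 0 < t.2.2 ∧ t.1 < t.2.1 ∧ t.1 ≠ t.2.2 ∧ t.2.1 ≠ t.2.2 ∧ t.1 ^ 2 + t.2.1 ^ 2 + 2 * t.2.2 ^ 2 = k}
def w2 (t : ℕ × ℕ × ℕ) : Fin 4 → ℕ := w4f t.1 t.2.1 t.2.2 t.2.2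
def mc2 : Multiset (Fin 4) := ↑([0, 1, 2, 2] : List (Fin 4))
def P2 : Set Pt := {p | jm p = mc2}
def C2 (k : ℕ) : Set (ℤ × ℤ × ℤ × ℤ) := Phi w2 '' (A2 k ×ˢ P2)

lemma map2 (t : ℕ × ℕ × ℕ) : mc2.map (w2 t) = ↑[t.1, t.2.1, t.2.2, t.2.2] := rfl

lemma ncardP2 : P2.ncard = 192 := by
  have : P2 = ↑((Finset.univ : Finset Pt).filter (fun p => jm p = mc2)) := by
    ext p; simp [P2]
  rw [this, Set.ncard_coe_finset]
  decide

lemma ncardC2 (k : ℕ) : (C2 k).ncard = (A2 k).ncard * 192 := by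
  rw [C2, ncard_class (A2 k) w2 mc2 P2 (fun p hp => hp) ?_ ?_ ?_, ncardP2]
  · intro a ha p hp
    exact zcW_of_pos _ mc2 p hp (by
      obtain ⟨x, y, z⟩ := a
      obtain ⟨h1, h2, h3, h4, h5, h6⟩ := ha
      dsimp only at h1 h2 h3 h4 h5 h6
      intro j hj
      fin_cases j <;> simp_all [mc2, w2] <;> omega)
  · intro a ha j hj jj hjj
    obtain ⟨x, y, z⟩ := a
    obtain ⟨h1, h2, h3, h4, h5, h6⟩ := ha
    dsimp only at h1 h2 h3 h4 h5 h6
    fin_cases j <;> fin_cases jj <;> simp_all [mc2, w2] <;> omega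
  · intro a ha a' ha' hmm
    obtain ⟨x, y, z⟩ := a
    obtain ⟨x', y', z'⟩ := a'
    obtain ⟨h1, h2, h3, h4, h5, h6⟩ := ha
    obtain ⟨h1', h2', h3', h4', h5', h6'⟩ := ha'
    dsimp only at h1 h2 h3 h4 h5 h6 h1' h2' h3' h4' h5' h6'
    simp only [map2] at hmm
    try dsimp only at hmm
    have := R2 x y z x' y' z' h3 (Ne.symm h4) (Ne.symm h5) h3' (Ne.symm h4') (Ne.symm h5') hmm
    simp_all

-- ============ CLASS 3 ============
def A3 (k : ℕ) : Set (ℕ × ℕ) := {p | 0 < p.1 ∧ p.1 < p.2 ∧ 2 * p.1 ^ 2 + 2 * p.2 ^ 2 = k}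
def w3 (t : ℕ × ℕ) : Fin 4 → ℕ := w4f t.1 t.2 t.1 t.2
def mc3 : Multiset (Fin 4) := ↑([0, 1, 0, 1] : List (Fin 4))
def P3 : Set Pt := {p | jm p = mc3}
def C3 (k : ℕ) : Set (ℤ × ℤ × ℤ × ℤ) := Phi w3 '' (A3 k ×ˢ P3)

lemma map3 (t : ℕ × ℕ) : mc3.map (w3 t) = ↑[t.1, t.2, t.1, t.2] := rfl

lemma ncardP3 : P3.ncard = 96 := by
  have : P3 = ↑((Finset.univ : Finset Pt).filter (fun p => jm p = mc3)) := by
    ext p; simp [P3]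
  rw [this, Set.ncard_coe_finset]
  decide

lemma ncardC3 (k : ℕ) : (C3 k).ncard = (A3 k).ncard * 96 := by
  rw [C3, ncard_class (A3 k) w3 mc3 P3 (fun p hp => hp) ?_ ?_ ?_, ncardP3]
  · intro a ha p hp
    exact zcW_of_pos _ mc3 p hp (by
      obtain ⟨x, y⟩ := a
      obtain ⟨h1, h2, h3⟩ := ha
      dsimp only at h1 h2 h3
      intro j hj
      fin_cases j <;> simp_all [mc3, w3] <;> omega)
  · intro a ha j hj jj hjj
    obtain ⟨x, y⟩ := a
    obtain ⟨h1, h2, h3⟩ := ha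
    dsimp only at h1 h2 h3
    fin_cases j <;> fin_cases jj <;> simp_all [mc3, w3] <;> omega
  · intro a ha a' ha' hmm
    obtain ⟨x, y⟩ := a
    obtain ⟨x', y'⟩ := a'
    obtain ⟨h1, h2, h3⟩ := ha
    obtain ⟨h1', h2', h3'⟩ := ha'
    dsimp only at h1 h2 h3 h1' h2' h3'
    simp only [map3] at hmm
    try dsimp only at hmm
    have := R3 x y x' y' h2 h2' hmm
    simp_all

-- ============ CLASS 4 ============
def A4 (k : ℕ) : Set (ℕ × ℕ) := {p | 0 < p.1 ∧ 0 < p.2 ∧ p.1 ≠ p.2 ∧ p.1 ^ 2 + 3 * p.2 ^ 2 = k}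
def w4 (t : ℕ × ℕ) : Fin 4 → ℕ := w4f t.1 t.2 t.2 t.2
def mc4 : Multiset (Fin 4) := ↑([0, 1, 1, 1] : List (Fin 4))
def P4 : Set Pt := {p | jm p = mc4}
def C4 (k : ℕ) : Set (ℤ × ℤ × ℤ × ℤ) := Phi w4 '' (A4 k ×ˢ P4)

lemma map4 (t : ℕ × ℕ) : mc4.map (w4 t) = ↑[t.1, t.2, t.2, t.2] := rfl

lemma ncardP4 : P4.ncard = 64 := by
  have : P4 = ↑((Finset.univ : Finset Pt).filter (fun p => jm p = mc4)) := by
    ext p; simp [P4]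
  rw [this, Set.ncard_coe_finset]
  decide

lemma ncardC4 (k : ℕ) : (C4 k).ncard = (A4 k).ncard * 64 := by
  rw [C4, ncard_class (A4 k) w4 mc4 P4 (fun p hp => hp) ?_ ?_ ?_, ncardP4]
  · intro a ha p hp
    exact zcW_of_pos _ mc4 p hp (by
      obtain ⟨x, y⟩ := a
      obtain ⟨h1, h2, h3, h4⟩ := ha
      dsimp only at h1 h2 h3 h4
      intro j hj
      fin_cases j <;> simp_all [mc4, w4] <;> omega)
  · intro a ha j hj jj hjj
    obtain ⟨x, y⟩ := a
    obtain ⟨h1, h2, h3, h4⟩ := ha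
    dsimp only at h1 h2 h3 h4
    fin_cases j <;> fin_cases jj <;> simp_all [mc4, w4] <;> omega
  · intro a ha a' ha' hmm
    obtain ⟨x, y⟩ := a
    obtain ⟨x', y'⟩ := a'
    obtain ⟨h1, h2, h3, h4⟩ := ha
    obtain ⟨h1', h2', h3', h4'⟩ := ha'
    dsimp only at h1 h2 h3 h4 h1' h2' h3' h4'
    simp only [map4] at hmm
    try dsimp only at hmm
    have := R5 x y x' y' h3 h3' hmm
    simp_all

-- ============ CLASS 5 ============
def A5 (k : ℕ) : Set (ℕ × ℕ × ℕ) := {t | 0 < t.1 ∧ t.1 < t.2.1 ∧ t.2.1 < t.2.2 ∧ t.1 ^ 2 + t.2.1 ^ 2 + t.2.2 ^ 2 = k}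
def w5 (t : ℕ × ℕ × ℕ) : Fin 4 → ℕ := w4f 0 t.1 t.2.1 t.2.2
def mc5 : Multiset (Fin 4) := ↑([0, 1, 2, 3] : List (Fin 4))
def P5 : Set Pt := {p | jm p = mc5 ∧ zc p}
def C5 (k : ℕ) : Set (ℤ × ℤ × ℤ × ℤ) := Phi w5 '' (A5 k ×ˢ P5)

lemma map5 (t : ℕ × ℕ × ℕ) : mc5.map (w5 t) = ↑[0, t.1, t.2.1, t.2.2] := rfl

lemma ncardP5 : P5.ncard = 192 := by
  have : P5 = ↑((Finset.univ : Finset Pt).filter (fun p => jm p = mc5 ∧ zc p)) := by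
    ext p; simp [P5]
  rw [this, Set.ncard_coe_finset]
  decide

lemma ncardC5 (k : ℕ) : (C5 k).ncard = (A5 k).ncard * 192 := by
  rw [C5, ncard_class (A5 k) w5 mc5 P5 (fun p hp => hp.1) ?_ ?_ ?_, ncardP5]
  · intro a ha p hp
    refine zcW_of_zc _ mc5 p hp.1 hp.2 ?_
    obtain ⟨x, y, z⟩ := a
    obtain ⟨h1, h2, h3, h4⟩ := ha
    dsimp only at h1 h2 h3 h4
    intro j hj
    fin_cases j <;> simp_all [mc5, w5] <;> omega
  · intro a ha j hj jj hjj
    obtain ⟨x, y, z⟩ := a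
    obtain ⟨h1, h2, h3, h4⟩ := ha
    dsimp only at h1 h2 h3 h4
    fin_cases j <;> fin_cases jj <;> simp_all [mc5, w5] <;> omega
  · intro a ha a' ha' hmm
    obtain ⟨x, y, z⟩ := a
    obtain ⟨x', y', z'⟩ := a'
    obtain ⟨h1, h2, h3, h4⟩ := ha
    obtain ⟨h1', h2', h3', h4'⟩ := ha'
    dsimp only at h1 h2 h3 h4 h1' h2' h3' h4'
    simp only [map5] at hmm
    try dsimp only at hmm
    have := sorted_rec 0 x y z 0 x' y' z' hmm (by omega) h2.le h3.le (by omega) h2'.le h3'.le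
    simp_all

-- ============ CLASS 6 ============
def A6 (k : ℕ) : Set (ℕ × ℕ) := {p | 0 < p.1 ∧ 0 < p.2 ∧ p.1 ≠ p.2 ∧ p.1 ^ 2 + 2 * p.2 ^ 2 = k}
def w6 (t : ℕ × ℕ) : Fin 4 → ℕ := w4f 0 t.1 t.2 t.2
def mc6 : Multiset (Fin 4) := ↑([0, 1, 2, 2] : List (Fin 4))
def P6 : Set Pt := {p | jm p = mc6 ∧ zc p}
def C6 (k : ℕ) : Set (ℤ × ℤ × ℤ × ℤ) := Phi w6 '' (A6 k ×ˢ P6)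

lemma map6 (t : ℕ × ℕ) : mc6.map (w6 t) = ↑[0, t.1, t.2, t.2] := rfl

lemma ncardP6 : P6.ncard = 96 := by
  have : P6 = ↑((Finset.univ : Finset Pt).filter (fun p => jm p = mc6 ∧ zc p)) := by
    ext p; simp [P6]
  rw [this, Set.ncard_coe_finset]
  decide

lemma ncardC6 (k : ℕ) : (C6 k).ncard = (A6 k).ncard * 96 := by
  rw [C6, ncard_class (A6 k) w6 mc6 P6 (fun p hp => hp.1) ?_ ?_ ?_, ncardP6]
  · intro a ha p hp
    refine zcW_of_zc _ mc6 p hp.1 hp.2 ?_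
    obtain ⟨x, y⟩ := a
    obtain ⟨h1, h2, h3, h4⟩ := ha
    dsimp only at h1 h2 h3 h4
    intro j hj
    fin_cases j <;> simp_all [mc6, w6] <;> omega
  · intro a ha j hj jj hjj
    obtain ⟨x, y⟩ := a
    obtain ⟨h1, h2, h3, h4⟩ := ha
    dsimp only at h1 h2 h3 h4
    fin_cases j <;> fin_cases jj <;> simp_all [mc6, w6] <;> omega
  · intro a ha a' ha' hmm
    obtain ⟨x, y⟩ := a
    obtain ⟨x', y'⟩ := a'
    obtain ⟨h1, h2, h3, h4⟩ := ha
    obtain ⟨h1', h2', h3', h4'⟩ := ha'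
    dsimp only at h1 h2 h3 h4 h1' h2' h3' h4'
    simp only [map6] at hmm
    try dsimp only at hmm
    have := R6 x y x' y' h1 h2 h3 h1' h2' h3' hmm
    simp_all

-- ============ CLASS 7 ============
def A7 (k : ℕ) : Set (ℕ × ℕ) := {p | 0 < p.1 ∧ p.1 < p.2 ∧ p.1 ^ 2 + p.2 ^ 2 = k}
def w7 (t : ℕ × ℕ) : Fin 4 → ℕ := w4f 0 t.1 t.2 0
def mc7 : Multiset (Fin 4) := ↑([0, 1, 2, 0] : List (Fin 4))
def P7 : Set Pt := {p | jm p = mc7 ∧ zc p}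
def C7 (k : ℕ) : Set (ℤ × ℤ × ℤ × ℤ) := Phi w7 '' (A7 k ×ˢ P7)

lemma map7 (t : ℕ × ℕ) : mc7.map (w7 t) = ↑[0, t.1, t.2, 0] := rfl

lemma ncardP7 : P7.ncard = 48 := by
  have : P7 = ↑((Finset.univ : Finset Pt).filter (fun p => jm p = mc7 ∧ zc p)) := by
    ext p; simp [P7]
  rw [this, Set.ncard_coe_finset]
  decide

lemma ncardC7 (k : ℕ) : (C7 k).ncard = (A7 k).ncard * 48 := by
  rw [C7, ncard_class (A7 k) w7 mc7 P7 (fun p hp => hp.1) ?_ ?_ ?_, ncardP7]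
  · intro a ha p hp
    refine zcW_of_zc _ mc7 p hp.1 hp.2 ?_
    obtain ⟨x, y⟩ := a
    obtain ⟨h1, h2, h3⟩ := ha
    dsimp only at h1 h2 h3
    intro j hj
    fin_cases j <;> simp_all [mc7, w7] <;> omega
  · intro a ha j hj jj hjj
    obtain ⟨x, y⟩ := a
    obtain ⟨h1, h2, h3⟩ := ha
    dsimp only at h1 h2 h3
    fin_cases j <;> fin_cases jj <;> simp_all [mc7, w7] <;> omega
  · intro a ha a' ha' hmm
    obtain ⟨x, y⟩ := a
    obtain ⟨x', y'⟩ := a'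
    obtain ⟨h1, h2, h3⟩ := ha
    obtain ⟨h1', h2', h3'⟩ := ha'
    dsimp only at h1 h2 h3 h1' h2' h3'
    simp only [map7] at hmm
    try dsimp only at hmm
    have := R7 x y x' y' h1 h2 h1' h2' hmm
    simp_all

-- ===== SS and finiteness =====
def SS (k : ℕ) : Set (ℤ × ℤ × ℤ × ℤ) := {q | q.1 ^ 2 + q.2.1 ^ 2 + q.2.2.1 ^ 2 + q.2.2.2 ^ 2 = (k : ℤ)}

lemma sq_bound (x k : ℤ) (h : x ^ 2 ≤ k) : -k ≤ x ∧ x ≤ k := by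
  have h1 : x ≤ x ^ 2 := by
    rcases le_or_gt x 0 with hx | hx
    · nlinarith [sq_nonneg x]
    · nlinarith
  have h2 : -x ≤ x ^ 2 := by
    rcases le_or_gt x 0 with hx | hx
    · nlinarith
    · nlinarith [sq_nonneg x]
  constructor <;> linarith

lemma SS_finite (k : ℕ) : (SS k).Finite := by
  apply Set.Finite.subset ((Set.finite_Icc (-(k : ℤ)) k).prod
    ((Set.finite_Icc (-(k : ℤ)) k).prod ((Set.finite_Icc (-(k : ℤ)) k).prod
      (Set.finite_Icc (-(k : ℤ)) k))))
  rintro ⟨x, y, z, v⟩ hq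
  simp only [SS, Set.mem_setOf_eq] at hq
  have bx := sq_bound x k (by nlinarith [sq_nonneg y, sq_nonneg z, sq_nonneg v])
  have by' := sq_bound y k (by nlinarith [sq_nonneg x, sq_nonneg z, sq_nonneg v])
  have bz := sq_bound z k (by nlinarith [sq_nonneg x, sq_nonneg y, sq_nonneg v])
  have bv := sq_bound v k (by nlinarith [sq_nonneg x, sq_nonneg y, sq_nonneg z])
  exact ⟨⟨bx.1, bx.2⟩, ⟨by'.1, by'.2⟩, ⟨bz.1, bz.2⟩, ⟨bv.1, bv.2⟩⟩

-- ===== sub S =====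
lemma subC1 (k : ℕ) : C1 k ⊆ SS k := by
  intro q hq
  exact class_sub_S k (A1 k) w1 mc1 P1 (fun p hp => hp) (by
    intro a ha
    obtain ⟨x, y, z, v⟩ := a
    obtain ⟨h1, h2, h3, h4, h5⟩ := ha
    dsimp only at h1 h2 h3 h4 h5
    rw [map1]
    try dsimp only
    rw [Sqs_coe]; linarith) q hq

lemma subC2 (k : ℕ) : C2 k ⊆ SS k := by
  intro q hq
  exact class_sub_S k (A2 k) w2 mc2 P2 (fun p hp => hp) (by
    intro a ha
    obtain ⟨x, y, z⟩ := a
    obtain ⟨h1, h2, h3, h4, h5, h6⟩ := ha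
    dsimp only at h1 h2 h3 h4 h5 h6
    rw [map2]
    try dsimp only
    rw [Sqs_coe]; linarith) q hq

lemma subC3 (k : ℕ) : C3 k ⊆ SS k := by
  intro q hq
  exact class_sub_S k (A3 k) w3 mc3 P3 (fun p hp => hp) (by
    intro a ha
    obtain ⟨x, y⟩ := a
    obtain ⟨h1, h2, h3⟩ := ha
    dsimp only at h1 h2 h3
    rw [map3]
    try dsimp only
    rw [Sqs_coe]; linarith) q hq

lemma subC4 (k : ℕ) : C4 k ⊆ SS k := by
  intro q hq
  exact class_sub_S k (A4 k) w4 mc4 P4 (fun p hp => hp) (by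
    intro a ha
    obtain ⟨x, y⟩ := a
    obtain ⟨h1, h2, h3, h4⟩ := ha
    dsimp only at h1 h2 h3 h4
    rw [map4]
    try dsimp only
    rw [Sqs_coe]; linarith) q hq

lemma subC5 (k : ℕ) : C5 k ⊆ SS k := by
  intro q hq
  exact class_sub_S k (A5 k) w5 mc5 P5 (fun p hp => hp.1) (by
    intro a ha
    obtain ⟨x, y, z⟩ := a
    obtain ⟨h1, h2, h3, h4⟩ := ha
    dsimp only at h1 h2 h3 h4
    rw [map5]
    try dsimp only
    rw [Sqs_coe]; linarith) q hq

lemma subC6 (k : ℕ) : C6 k ⊆ SS k := by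
  intro q hq
  exact class_sub_S k (A6 k) w6 mc6 P6 (fun p hp => hp.1) (by
    intro a ha
    obtain ⟨x, y⟩ := a
    obtain ⟨h1, h2, h3, h4⟩ := ha
    dsimp only at h1 h2 h3 h4
    rw [map6]
    try dsimp only
    rw [Sqs_coe]; linarith) q hq

lemma subC7 (k : ℕ) : C7 k ⊆ SS k := by
  intro q hq
  exact class_sub_S k (A7 k) w7 mc7 P7 (fun p hp => hp.1) (by
    intro a ha
    obtain ⟨x, y⟩ := a
    obtain ⟨h1, h2, h3⟩ := ha
    dsimp only at h1 h2 h3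
    rw [map7]
    try dsimp only
    rw [Sqs_coe]; linarith) q hq

-- ===== helpers for cls =====
lemma card2' (x y : ℕ) (h : x ≠ y) : ({x, y} : Finset ℕ).card = 2 := by
  rw [Finset.card_insert_of_notMem (by simp [h]), Finset.card_singleton]

-- ===== cls lemmas =====
lemma clsC1 (k : ℕ) : ∀ q ∈ C1 k, cls (μq q) = 1 := by
  rintro q ⟨⟨a, p⟩, ⟨ha, hp⟩, rfl⟩
  obtain ⟨x, y, z, v⟩ := a
  obtain ⟨h1, h2, h3, h4, h5⟩ := ha
  dsimp only at h1 h2 h3 h4 h5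
  have hμ : μq (Phi w1 ((x, y, z, v), p)) = ↑[x, y, z, v] := by
    show μq (dec4 (w1 (x, y, z, v)) p) = _
    rw [mu_dec, hp, map1]
  rw [hμ]
  have c0 : (↑[x, y, z, v] : Multiset ℕ).count 0 = 0 := by
    rw [cnt4]; split_ifs <;> omega
  have tfc : (↑[x, y, z, v] : Multiset ℕ).toFinset.card = 4 := by
    rw [tf4]; exact card4' x y z v (by omega) (by omega) (by omega) (by omega) (by omega) (by omega)
  unfold cls
  rw [c0, tfc]
  norm_num

lemma clsC2 (k : ℕ) : ∀ q ∈ C2 k, cls (μq q) = 2 := by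
  rintro q ⟨⟨a, p⟩, ⟨ha, hp⟩, rfl⟩
  obtain ⟨x, y, z⟩ := a
  obtain ⟨h1, h2, h3, h4, h5, h6⟩ := ha
  dsimp only at h1 h2 h3 h4 h5 h6
  have hμ : μq (Phi w2 ((x, y, z), p)) = ↑[x, y, z, z] := by
    show μq (dec4 (w2 (x, y, z)) p) = _
    rw [mu_dec, hp, map2]
  rw [hμ]
  have c0 : (↑[x, y, z, z] : Multiset ℕ).count 0 = 0 := by
    rw [cnt4]; split_ifs <;> omega
  have tfs : (↑[x, y, z, z] : Multiset ℕ).toFinset = {x, y, z} := by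
    rw [tf4]; ext t; simp; try tauto
  have tfc : (↑[x, y, z, z] : Multiset ℕ).toFinset.card = 3 := by
    rw [tfs]; exact card3' x y z (by omega) (by omega) (by omega)
  unfold cls
  rw [c0, tfc]
  norm_num

lemma clsC3 (k : ℕ) : ∀ q ∈ C3 k, cls (μq q) = 3 := by
  rintro q ⟨⟨a, p⟩, ⟨ha, hp⟩, rfl⟩
  obtain ⟨x, y⟩ := a
  obtain ⟨h1, h2, h3⟩ := ha
  dsimp only at h1 h2 h3
  have hμ : μq (Phi w3 ((x, y), p)) = ↑[x, y, x, y] := by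
    show μq (dec4 (w3 (x, y)) p) = _
    rw [mu_dec, hp, map3]
  rw [hμ]
  have c0 : (↑[x, y, x, y] : Multiset ℕ).count 0 = 0 := by
    rw [cnt4]; split_ifs <;> omega
  have tfs : (↑[x, y, x, y] : Multiset ℕ).toFinset = {x, y} := by
    rw [tf4]; ext t; simp; try tauto
  have tfc : (↑[x, y, x, y] : Multiset ℕ).toFinset.card = 2 := by
    rw [tfs]; exact card2' x y (by omega)
  have h3' : ¬∃ t, (↑[x, y, x, y] : Multiset ℕ).count t = 3 := by
    rintro ⟨t, ht⟩
    rw [cnt4] at ht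
    split_ifs at ht <;> omega
  unfold cls
  rw [c0, tfc]
  norm_num
  first
    | exact fun t ht => h3' ⟨t, by rw [Multiset.coe_count]; exact ht⟩
    | (obtain ⟨t, ht⟩ := h3'; exact ⟨t, by rw [Multiset.coe_count] at ht; exact ht⟩)

lemma clsC4 (k : ℕ) : ∀ q ∈ C4 k, cls (μq q) = 4 := by
  rintro q ⟨⟨a, p⟩, ⟨ha, hp⟩, rfl⟩
  obtain ⟨x, y⟩ := a
  obtain ⟨h1, h2, h3, h4⟩ := ha
  dsimp only at h1 h2 h3 h4
  have hμ : μq (Phi w4 ((x, y), p)) = ↑[x, y, y, y] := by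
    show μq (dec4 (w4 (x, y)) p) = _
    rw [mu_dec, hp, map4]
  rw [hμ]
  have c0 : (↑[x, y, y, y] : Multiset ℕ).count 0 = 0 := by
    rw [cnt4]; split_ifs <;> omega
  have tfs : (↑[x, y, y, y] : Multiset ℕ).toFinset = {x, y} := by
    rw [tf4]; ext t; simp; try tauto
  have tfc : (↑[x, y, y, y] : Multiset ℕ).toFinset.card = 2 := by
    rw [tfs]; exact card2' x y h3
  have h3' : ∃ t, (↑[x, y, y, y] : Multiset ℕ).count t = 3 := by
    refine ⟨y, ?_⟩
    rw [cnt4]; split_ifs <;> omega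
  unfold cls
  rw [c0, tfc]
  norm_num
  first
    | exact fun t ht => h3' ⟨t, by rw [Multiset.coe_count]; exact ht⟩
    | (obtain ⟨t, ht⟩ := h3'; exact ⟨t, by rw [Multiset.coe_count] at ht; exact ht⟩)

lemma clsC5 (k : ℕ) : ∀ q ∈ C5 k, cls (μq q) = 5 := by
  rintro q ⟨⟨a, p⟩, ⟨ha, hp⟩, rfl⟩
  obtain ⟨x, y, z⟩ := a
  obtain ⟨h1, h2, h3, h4⟩ := ha
  dsimp only at h1 h2 h3 h4
  have hμ : μq (Phi w5 ((x, y, z), p)) = ↑[0, x, y, z] := by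
    show μq (dec4 (w5 (x, y, z)) p) = _
    rw [mu_dec, hp.1, map5]
  rw [hμ]
  have c0 : (↑[0, x, y, z] : Multiset ℕ).count 0 = 1 := by
    rw [cnt4]; split_ifs <;> omega
  have tfc : (↑[0, x, y, z] : Multiset ℕ).toFinset.card = 4 := by
    rw [tf4]; exact card4' 0 x y z (by omega) (by omega) (by omega) (by omega) (by omega) (by omega)
  unfold cls
  rw [c0, tfc]
  norm_num

lemma clsC6 (k : ℕ) : ∀ q ∈ C6 k, cls (μq q) = 6 := by
  rintro q ⟨⟨a, p⟩, ⟨ha, hp⟩, rfl⟩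
  obtain ⟨x, y⟩ := a
  obtain ⟨h1, h2, h3, h4⟩ := ha
  dsimp only at h1 h2 h3 h4
  have hμ : μq (Phi w6 ((x, y), p)) = ↑[0, x, y, y] := by
    show μq (dec4 (w6 (x, y)) p) = _
    rw [mu_dec, hp.1, map6]
  rw [hμ]
  have c0 : (↑[0, x, y, y] : Multiset ℕ).count 0 = 1 := by
    rw [cnt4]; split_ifs <;> omega
  have tfs : (↑[0, x, y, y] : Multiset ℕ).toFinset = {0, x, y} := by
    rw [tf4]; ext t; simp; try tauto
  have tfc : (↑[0, x, y, y] : Multiset ℕ).toFinset.card = 3 := by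
    rw [tfs]; exact card3' 0 x y (by omega) (by omega) (by omega)
  unfold cls
  rw [c0, tfc]
  norm_num

lemma clsC7 (k : ℕ) : ∀ q ∈ C7 k, cls (μq q) = 7 := by
  rintro q ⟨⟨a, p⟩, ⟨ha, hp⟩, rfl⟩
  obtain ⟨x, y⟩ := a
  obtain ⟨h1, h2, h3⟩ := ha
  dsimp only at h1 h2 h3
  have hμ : μq (Phi w7 ((x, y), p)) = ↑[0, x, y, 0] := by
    show μq (dec4 (w7 (x, y)) p) = _
    rw [mu_dec, hp.1, map7]
  rw [hμ]
  have c0 : (↑[0, x, y, 0] : Multiset ℕ).count 0 = 2 := by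
    rw [cnt4]; split_ifs <;> omega
  unfold cls
  rw [c0]
  norm_num

lemma list_four {α : Type} (l : List α) (h : l.length = 4) : ∃ a b c d, l = [a, b, c, d] := by
  rcases l with _ | ⟨a, l⟩; · simp at h
  rcases l with _ | ⟨b, l⟩; · simp at h
  rcases l with _ | ⟨c, l⟩; · simp at h
  rcases l with _ | ⟨d, l⟩; · simp at h
  rcases l with _ | ⟨e, l⟩
  · exact ⟨a, b, c, d, rfl⟩
  · simp at h

lemma cover (k : ℕ) (hk : 0 < k)
    (h : ∀ m : ℕ, 0 < m → k ≠ m ^ 2 ∧ k ≠ 2 * m ^ 2 ∧ k ≠ 3 * m ^ 2 ∧ k ≠ 4 * m ^ 2) :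
    ∀ q ∈ SS k, q ∈ C1 k ∪ C2 k ∪ C3 k ∪ C4 k ∪ C5 k ∪ C6 k ∪ C7 k := by
  intro q hq
  simp only [SS, Set.mem_setOf_eq] at hq
  have hSq : Sqs (μq q) = k := by
    have h1 : ((Sqs (μq q) : ℕ) : ℤ) = (k : ℤ) := by rw [← sum_sq_eq q]; exact hq
    exact_mod_cast h1
  have hlen : (Multiset.sort (μq q) (· ≤ ·)).length = 4 := by
    rw [Multiset.length_sort]; simp [μq]
  obtain ⟨a, b, c, d, hl4⟩ := list_four _ hlen
  have hperm : (↑[a, b, c, d] : Multiset ℕ) = μq q := by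
    rw [← hl4]; exact Multiset.sort_eq _ _
  have hsort : List.Pairwise (· ≤ ·) [a, b, c, d] := by
    rw [← hl4]; exact Multiset.pairwise_sort _ _
  simp only [List.pairwise_cons, List.mem_cons, List.mem_singleton, List.not_mem_nil,
    List.Pairwise.nil] at hsort
  have s1 : a ≤ b := by tauto
  have s2 : b ≤ c := by tauto
  have s3 : c ≤ d := by tauto
  have hμ4 : μq q = ↑[a, b, c, d] := hperm.symm
  have hk4 : a ^ 2 + b ^ 2 + c ^ 2 + d ^ 2 = k := by
    have := hSq; rw [hμ4, Sqs_coe] at this; exact this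
  simp only [Set.mem_union]
  rcases Nat.eq_zero_or_pos a with rfl | ha0
  · -- a = 0
    rcases Nat.eq_zero_or_pos b with rfl | hb0
    · rcases Nat.eq_zero_or_pos c with rfl | hc0
      · -- 0,0,0,d
        rcases Nat.eq_zero_or_pos d with rfl | hd0
        · exfalso; simp at hk4; omega
        · exact absurd (show k = d ^ 2 by linarith) (h d hd0).1
      · rcases eq_or_lt_of_le s3 with rfl | hcd
        · exact absurd (show k = 2 * c ^ 2 by linarith) (h c hc0).2.1
        · -- class 7, (c, d)
          have hre : μq q = ↑[0, c, d, 0] := by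
            rw [hμ4, Multiset.coe_eq_coe, List.perm_iff_count]
            intro t
            simp only [List.count_cons, List.count_nil, beq_iff_eq]
            split_ifs <;> omega
          have hmem : q ∈ C7 k :=
            mem_class (A7 k) w7 mc7 P7 (fun p h1 h2 => ⟨h1, h2⟩) (fun a => rfl) q (c, d)
              ⟨hc0, hcd, by dsimp only; linarith⟩ hre
          tauto
    · rcases eq_or_lt_of_le s2 with rfl | hbc
      · rcases eq_or_lt_of_le s3 with rfl | hcd
        · exact absurd (show k = 3 * b ^ 2 by linarith) (h b hb0).2.2.1
        · -- class 6, (d, b)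
          have hre : μq q = ↑[0, d, b, b] := by
            rw [hμ4, Multiset.coe_eq_coe, List.perm_iff_count]
            intro t
            simp only [List.count_cons, List.count_nil, beq_iff_eq]
            split_ifs <;> omega
          have hmem : q ∈ C6 k :=
            mem_class (A6 k) w6 mc6 P6 (fun p h1 h2 => ⟨h1, h2⟩) (fun a => rfl) q (d, b)
              ⟨by dsimp only; omega, hb0, by dsimp only; omega, by dsimp only; linarith⟩ hre
          tauto
      · rcases eq_or_lt_of_le s3 with rfl | hcd
        · -- class 6, (b, c)
          have hre : μq q = ↑[0, b, c, c] := hμ4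
          have hmem : q ∈ C6 k :=
            mem_class (A6 k) w6 mc6 P6 (fun p h1 h2 => ⟨h1, h2⟩) (fun a => rfl) q (b, c)
              ⟨hb0, by dsimp only; omega, by dsimp only; omega, by dsimp only; linarith⟩ hre
          tauto
        · -- class 5, (b, c, d)
          have hre : μq q = ↑[0, b, c, d] := hμ4
          have hmem : q ∈ C5 k :=
            mem_class (A5 k) w5 mc5 P5 (fun p h1 h2 => ⟨h1, h2⟩) (fun a => rfl) q (b, c, d)
              ⟨hb0, hbc, hcd, by dsimp only; linarith⟩ hre
          tauto
  · -- 0 < a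
    rcases eq_or_lt_of_le s1 with rfl | hab
    · rcases eq_or_lt_of_le s2 with rfl | hbc
      · rcases eq_or_lt_of_le s3 with rfl | hcd
        · exact absurd (show k = 4 * a ^ 2 by linarith) (h a ha0).2.2.2
        · -- class 4, (d, a)
          have hre : μq q = ↑[d, a, a, a] := by
            rw [hμ4, Multiset.coe_eq_coe, List.perm_iff_count]
            intro t
            simp only [List.count_cons, List.count_nil, beq_iff_eq]
            split_ifs <;> omega
          have hmem : q ∈ C4 k :=
            mem_class' (A4 k) w4 mc4 P4 (fun p hp => hp) q (d, a)
              ⟨by dsimp only; omega, ha0, by dsimp only; omega, by dsimp only; linarith⟩ hre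
          tauto
      · rcases eq_or_lt_of_le s3 with rfl | hcd
        · -- class 3, (a, c)
          have hre : μq q = ↑[a, c, a, c] := by
            rw [hμ4, Multiset.coe_eq_coe, List.perm_iff_count]
            intro t
            simp only [List.count_cons, List.count_nil, beq_iff_eq]
            split_ifs <;> omega
          have hmem : q ∈ C3 k :=
            mem_class' (A3 k) w3 mc3 P3 (fun p hp => hp) q (a, c)
              ⟨ha0, hbc, by dsimp only; linarith⟩ hre
          tauto
        · -- class 2, (c, d, a)
          have hre : μq q = ↑[c, d, a, a] := by
            rw [hμ4, Multiset.coe_eq_coe, List.perm_iff_count]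
            intro t
            simp only [List.count_cons, List.count_nil, beq_iff_eq]
            split_ifs <;> omega
          have hmem : q ∈ C2 k :=
            mem_class' (A2 k) w2 mc2 P2 (fun p hp => hp) q (c, d, a)
              ⟨by dsimp only; omega, ha0, hcd, by dsimp only; omega, by dsimp only; omega, by dsimp only; linarith⟩ hre
          tauto
    · rcases eq_or_lt_of_le s2 with rfl | hbc
      · rcases eq_or_lt_of_le s3 with rfl | hcd
        · -- class 4, (a, b)
          have hre : μq q = ↑[a, b, b, b] := hμ4
          have hmem : q ∈ C4 k :=
            mem_class' (A4 k) w4 mc4 P4 (fun p hp => hp) q (a, b)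
              ⟨ha0, by dsimp only; omega, by dsimp only; omega, by dsimp only; linarith⟩ hre
          tauto
        · -- class 2, (a, d, b)
          have hre : μq q = ↑[a, d, b, b] := by
            rw [hμ4, Multiset.coe_eq_coe, List.perm_iff_count]
            intro t
            simp only [List.count_cons, List.count_nil, beq_iff_eq]
            split_ifs <;> omega
          have hmem : q ∈ C2 k :=
            mem_class' (A2 k) w2 mc2 P2 (fun p hp => hp) q (a, d, b)
              ⟨ha0, by dsimp only; omega, by dsimp only; omega, by dsimp only; omega, by dsimp only; omega, by dsimp only; linarith⟩ hre
          tauto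
      · rcases eq_or_lt_of_le s3 with rfl | hcd
        · -- class 2, (a, b, c)
          have hre : μq q = ↑[a, b, c, c] := hμ4
          have hmem : q ∈ C2 k :=
            mem_class' (A2 k) w2 mc2 P2 (fun p hp => hp) q (a, b, c)
              ⟨ha0, by dsimp only; omega, hab, by dsimp only; omega, by dsimp only; omega, by dsimp only; linarith⟩ hre
          tauto
        · -- class 1
          have hre : μq q = ↑[a, b, c, d] := hμ4
          have hmem : q ∈ C1 k :=
            mem_class' (A1 k) w1 mc1 P1 (fun p hp => hp) q (a, b, c, d)
              ⟨ha0, hab, hbc, hcd, by dsimp only; linarith⟩ hre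
          tauto

lemma A3_ncard (k : ℕ) : (A3 k).ncard = L2half k := by
  unfold L2half
  by_cases hk2 : k % 2 = 0
  · rw [if_pos hk2]
    have hiff : ∀ A B : ℕ, (2 * A + 2 * B = k) ↔ (A + B = k / 2) := fun A B => by omega
    have hset : A3 k = {p : ℕ × ℕ | 0 < p.1 ∧ p.1 < p.2 ∧ p.1 ^ 2 + p.2 ^ 2 = k / 2} := by
      ext p
      simp only [A3, Set.mem_setOf_eq]
      rw [hiff (p.1 ^ 2) (p.2 ^ 2)]
    rw [hset]; rfl
  · rw [if_neg hk2]
    have hset : A3 k = ∅ := by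
      ext p
      simp only [A3, Set.mem_setOf_eq, Set.mem_empty_iff_false, iff_false]
      rintro ⟨u1, u2, u3⟩
      have himp : ∀ A B : ℕ, 2 * A + 2 * B = k → False := fun A B hAB => by omega
      exact himp _ _ u3
    rw [hset, Set.ncard_empty]

theorem stmt10 (k : ℕ) (hk : 0 < k)
    (h : ∀ m : ℕ, 0 < m → k ≠ m ^ 2 ∧ k ≠ 2 * m ^ 2 ∧ k ≠ 3 * m ^ 2 ∧ k ≠ 4 * m ^ 2) :
    (384 * L4 k : ℤ) =
      N4 k - 192 * L112 k - 192 * L3 k - 48 * L2 k - 96 * L12 k - 64 * L13 k - 96 * L2half k := by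
  have e1 := clsC1 k
  have e2 := clsC2 k
  have e3 := clsC3 k
  have e4 := clsC4 k
  have e5 := clsC5 k
  have e6 := clsC6 k
  have e7 := clsC7 k
  have d12 : Disjoint (C1 k) (C2 k) := by
    rw [Set.disjoint_left]; intro q hq1 hq2
    have := e1 q hq1; have := e2 q hq2; omega
  have d13 : Disjoint (C1 k) (C3 k) := by
    rw [Set.disjoint_left]; intro q hq1 hq2
    have := e1 q hq1; have := e3 q hq2; omega
  have d14 : Disjoint (C1 k) (C4 k) := by
    rw [Set.disjoint_left]; intro q hq1 hq2
    have := e1 q hq1; have := e4 q hq2; omega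
  have d15 : Disjoint (C1 k) (C5 k) := by
    rw [Set.disjoint_left]; intro q hq1 hq2
    have := e1 q hq1; have := e5 q hq2; omega
  have d16 : Disjoint (C1 k) (C6 k) := by
    rw [Set.disjoint_left]; intro q hq1 hq2
    have := e1 q hq1; have := e6 q hq2; omega
  have d17 : Disjoint (C1 k) (C7 k) := by
    rw [Set.disjoint_left]; intro q hq1 hq2
    have := e1 q hq1; have := e7 q hq2; omega
  have d23 : Disjoint (C2 k) (C3 k) := by
    rw [Set.disjoint_left]; intro q hq1 hq2
    have := e2 q hq1; have := e3 q hq2; omega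
  have d24 : Disjoint (C2 k) (C4 k) := by
    rw [Set.disjoint_left]; intro q hq1 hq2
    have := e2 q hq1; have := e4 q hq2; omega
  have d25 : Disjoint (C2 k) (C5 k) := by
    rw [Set.disjoint_left]; intro q hq1 hq2
    have := e2 q hq1; have := e5 q hq2; omega
  have d26 : Disjoint (C2 k) (C6 k) := by
    rw [Set.disjoint_left]; intro q hq1 hq2
    have := e2 q hq1; have := e6 q hq2; omega
  have d27 : Disjoint (C2 k) (C7 k) := by
    rw [Set.disjoint_left]; intro q hq1 hq2
    have := e2 q hq1; have := e7 q hq2; omega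
  have d34 : Disjoint (C3 k) (C4 k) := by
    rw [Set.disjoint_left]; intro q hq1 hq2
    have := e3 q hq1; have := e4 q hq2; omega
  have d35 : Disjoint (C3 k) (C5 k) := by
    rw [Set.disjoint_left]; intro q hq1 hq2
    have := e3 q hq1; have := e5 q hq2; omega
  have d36 : Disjoint (C3 k) (C6 k) := by
    rw [Set.disjoint_left]; intro q hq1 hq2
    have := e3 q hq1; have := e6 q hq2; omega
  have d37 : Disjoint (C3 k) (C7 k) := by
    rw [Set.disjoint_left]; intro q hq1 hq2
    have := e3 q hq1; have := e7 q hq2; omega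
  have d45 : Disjoint (C4 k) (C5 k) := by
    rw [Set.disjoint_left]; intro q hq1 hq2
    have := e4 q hq1; have := e5 q hq2; omega
  have d46 : Disjoint (C4 k) (C6 k) := by
    rw [Set.disjoint_left]; intro q hq1 hq2
    have := e4 q hq1; have := e6 q hq2; omega
  have d47 : Disjoint (C4 k) (C7 k) := by
    rw [Set.disjoint_left]; intro q hq1 hq2
    have := e4 q hq1; have := e7 q hq2; omega
  have d56 : Disjoint (C5 k) (C6 k) := by
    rw [Set.disjoint_left]; intro q hq1 hq2
    have := e5 q hq1; have := e6 q hq2; omega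
  have d57 : Disjoint (C5 k) (C7 k) := by
    rw [Set.disjoint_left]; intro q hq1 hq2
    have := e5 q hq1; have := e7 q hq2; omega
  have d67 : Disjoint (C6 k) (C7 k) := by
    rw [Set.disjoint_left]; intro q hq1 hq2
    have := e6 q hq1; have := e7 q hq2; omega
  have f1 : (C1 k).Finite := (SS_finite k).subset (subC1 k)
  have f2 : (C2 k).Finite := (SS_finite k).subset (subC2 k)
  have f3 : (C3 k).Finite := (SS_finite k).subset (subC3 k)
  have f4 : (C4 k).Finite := (SS_finite k).subset (subC4 k)
  have f5 : (C5 k).Finite := (SS_finite k).subset (subC5 k)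
  have f6 : (C6 k).Finite := (SS_finite k).subset (subC6 k)
  have f7 : (C7 k).Finite := (SS_finite k).subset (subC7 k)
  have hcov : SS k = C1 k ∪ C2 k ∪ C3 k ∪ C4 k ∪ C5 k ∪ C6 k ∪ C7 k := by
    apply Set.Subset.antisymm
    · intro q hq; exact cover k hk h q hq
    · intro q hq
      simp only [Set.mem_union] at hq
      rcases hq with ((((((hq | hq) | hq) | hq) | hq) | hq) | hq)
      exacts [subC1 k hq, subC2 k hq, subC3 k hq, subC4 k hq, subC5 k hq, subC6 k hq, subC7 k hq]
  have D3 : Disjoint (C1 k ∪ C2 k) (C3 k) := Set.disjoint_union_left.mpr ⟨d13, d23⟩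
  have D4 : Disjoint (C1 k ∪ C2 k ∪ C3 k) (C4 k) :=
    Set.disjoint_union_left.mpr ⟨Set.disjoint_union_left.mpr ⟨d14, d24⟩, d34⟩
  have D5 : Disjoint (C1 k ∪ C2 k ∪ C3 k ∪ C4 k) (C5 k) :=
    Set.disjoint_union_left.mpr ⟨Set.disjoint_union_left.mpr
      ⟨Set.disjoint_union_left.mpr ⟨d15, d25⟩, d35⟩, d45⟩
  have D6 : Disjoint (C1 k ∪ C2 k ∪ C3 k ∪ C4 k ∪ C5 k) (C6 k) :=
    Set.disjoint_union_left.mpr ⟨Set.disjoint_union_left.mpr ⟨Set.disjoint_union_left.mpr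
      ⟨Set.disjoint_union_left.mpr ⟨d16, d26⟩, d36⟩, d46⟩, d56⟩
  have D7 : Disjoint (C1 k ∪ C2 k ∪ C3 k ∪ C4 k ∪ C5 k ∪ C6 k) (C7 k) :=
    Set.disjoint_union_left.mpr ⟨Set.disjoint_union_left.mpr ⟨Set.disjoint_union_left.mpr
      ⟨Set.disjoint_union_left.mpr ⟨Set.disjoint_union_left.mpr ⟨d17, d27⟩, d37⟩, d47⟩, d57⟩, d67⟩
  have hcard : (SS k).ncard = (C1 k).ncard + (C2 k).ncard + (C3 k).ncard + (C4 k).ncard +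
      (C5 k).ncard + (C6 k).ncard + (C7 k).ncard := by
    rw [hcov,
      Set.ncard_union_eq D7 (((((f1.union f2).union f3).union f4).union f5).union f6) f7,
      Set.ncard_union_eq D6 ((((f1.union f2).union f3).union f4).union f5) f6,
      Set.ncard_union_eq D5 (((f1.union f2).union f3).union f4) f5,
      Set.ncard_union_eq D4 ((f1.union f2).union f3) f4,
      Set.ncard_union_eq D3 (f1.union f2) f3,
      Set.ncard_union_eq d12 f1 f2]
  have hN : N4 k = (SS k).ncard := rfl
  have key : N4 k = L4 k * 384 + L112 k * 192 + L2half k * 96 + L13 k * 64 + L3 k * 192 +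
      L12 k * 96 + L2 k * 48 := by
    rw [hN, hcard, ncardC1 k, ncardC2 k, ncardC3 k, ncardC4 k, ncardC5 k, ncardC6 k, ncardC7 k,
      A3_ncard k]
    rfl
  omega
end
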